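/- arXiv:0801.4156 — 3 statements merged into one kernel-verified Lean document; each statement's English description precedes it below -/
import Mathlib

section
/- Let m₁ ≤ m₂ be positive real numbers. Let (ρ₁⁽ⁿ⁾)ₙ and (ρ₂⁽ⁿ⁾)ₙ be sequences of finite positive Borel measures on the circle Λ with ρ₁⁽ⁿ⁾(Λ) = m₁ and ρ₂⁽ⁿ⁾(Λ) = m₂, converging weakly to measures ρ₁ and ρ₂ respectively, where ρ₁ and ρ₂ are absolutely continuous with respect to Haar measure. Then for every v ∈ Λ, the fluxes converge pointwise: Jⁿ(v) → J(v) as n → ∞, where Jⁿ is the flux associated to the pair (ρ₁⁽ⁿ⁾, ρ₂⁽ⁿ⁾) and J the flux associated to (ρ₁, ρ₂). -/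
open MeasureTheory Set Filter Topology
open scoped ENNReal NNReal

noncomputable section

instance fact01 : Fact ((0:ℝ) < 1) := ⟨zero_lt_one⟩

/-- The circle `ℝ/ℤ`. -/
abbrev Circle' : Type := AddCircle (1:ℝ)

/-- The angular position of `w` in the arc starting at `u`, measured positively;
a real number in `[0,1)`. -/
noncomputable def theta (u w : Circle') : ℝ := ((AddCircle.equivIco 1 0) (w - u) : ℝ)

/-- The closed arc `[u,v]` from `u` to `v` in the positive direction. -/
def arcCC (u v : Circle') : Set Circle' := {w | theta u w ≤ theta u v}

/-- The half-open arc `(u,v]`. -/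
def arcOC (u v : Circle') : Set Circle' := {w | 0 < theta u w ∧ theta u w ≤ theta u v}

/-- The half-open arc `[u,v)`. -/
def arcCO (u v : Circle') : Set Circle' := {w | theta u w < theta u v}

/-- The open arc `(u,v)`. -/
def arcOO (u v : Circle') : Set Circle' := {w | 0 < theta u w ∧ theta u w < theta u v}

/-- The excess `E(u,v) = ρ₁([u,v]) - ρ₂([u,v])`. -/
noncomputable def excess (ρ₁ ρ₂ : Measure Circle') (u v : Circle') : ℝ :=
  (ρ₁ (arcCC u v)).toReal - (ρ₂ (arcCC u v)).toReal

/-- The flux `J(v) = sup_u max (E(u,v)) 0`. -/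
noncomputable def flux (ρ₁ ρ₂ : Measure Circle') (v : Circle') : ℝ :=
  ⨆ u : Circle', max (excess ρ₁ ρ₂ u v) 0

/-- The set `𝒥 = {v | ∃ u, E(u,v) > 0}`. -/
def Jset (ρ₁ ρ₂ : Measure Circle') : Set Circle' := {v | ∃ u : Circle', 0 < excess ρ₁ ρ₂ u v}

namespace S9

lemma theta_mem (u w : Circle') : theta u w ∈ Ico (0:ℝ) 1 := by
  have h := ((AddCircle.equivIco 1 0) (w - u)).2
  simpa [theta] using h

lemma coe_theta (u w : Circle') : ((theta u w : ℝ) : Circle') = w - u := by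
  have := (AddCircle.equivIco 1 0).symm_apply_apply (w - u)
  simpa [theta, AddCircle.equivIco, QuotientAddGroup.equivIcoMod] using this

lemma theta_coe (u : Circle') {s : ℝ} (hs : s ∈ Ico (0:ℝ) 1) : theta u (u + ↑s) = s := by
  have h1 : ((theta u (u + ↑s) : ℝ) : Circle') = ((s : ℝ) : Circle') := by
    rw [coe_theta]; abel
  rw [AddCircle.coe_eq_coe_iff_of_mem_Ico (a := (0:ℝ)) (by simpa [zero_add] using theta_mem u (u + ↑s)) (by simpa [zero_add] using hs)] at h1
  exact h1

lemma coe_real_eq_coe_iff {s s' : ℝ} (hs : s ∈ Ico (0:ℝ) 1) (hs' : s' ∈ Ico (0:ℝ) 1) :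
    ((s : ℝ) : Circle') = ((s' : ℝ) : Circle') ↔ s = s' :=
  AddCircle.coe_eq_coe_iff_of_mem_Ico (a := (0:ℝ)) (by simpa using hs) (by simpa using hs')

lemma swap (u v w : Circle') : theta u w ≤ theta u v ↔ theta w v ≤ theta u v := by
  have hA := theta_mem u w
  have hB := theta_mem u v
  have hC := theta_mem w v
  have hcoe : ((theta w v : ℝ) : Circle') = ((theta u v - theta u w : ℝ) : Circle') := by
    rw [show ((theta u v - theta u w : ℝ) : Circle')
        = ((theta u v : ℝ) : Circle') - ((theta u w : ℝ) : Circle') from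
      QuotientAddGroup.mk_sub _ _ _]
    rw [coe_theta, coe_theta, coe_theta]; abel
  rcases le_or_gt (theta u w) (theta u v) with h | h
  · have hc : theta w v = theta u v - theta u w := by
      rw [coe_real_eq_coe_iff hC ⟨by linarith [hA.1, hA.2, hB.1, hB.2], by linarith [hA.1, hB.2]⟩] at hcoe
      exact hcoe
    constructor <;> intro _ <;> [skip; exact h]
    rw [hc]; linarith [hA.1]
  · have hc : theta w v = theta u v - theta u w + 1 := by
      have h2 : ((theta w v : ℝ) : Circle') = ((theta u v - theta u w + 1 : ℝ) : Circle') := by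
        rw [hcoe, AddCircle.coe_add_period]
      rw [coe_real_eq_coe_iff hC ⟨by linarith [hB.1, hA.2], by linarith [hA.1, hB.2, h]⟩] at h2
      exact h2
    constructor <;> intro h' <;> [linarith; (rw [hc] at h'; linarith [hA.2])]

lemma arcCC_eq (u v : Circle') : arcCC u v = (fun w => theta w v) ⁻¹' Iic (theta u v) := by
  ext w
  simp only [arcCC, mem_setOf_eq, mem_preimage, mem_Iic]
  exact swap u v w

lemma measurable_F (v : Circle') : Measurable (fun w => theta w v) := by
  have h1 : Measurable (fun w : Circle' => v - w) := measurable_const.sub measurable_id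
  have h2 := (AddCircle.measurableEquivIco (T := (1:ℝ)) 0).measurable
  exact (measurable_subtype_coe.comp h2).comp h1

lemma continuous_coe_circle : Continuous (fun s : ℝ => (s : Circle')) := AddCircle.continuous_mk' 1

lemma preimage_Iic_one (v : Circle') : (fun w => theta w v) ⁻¹' Iic 1 = univ := by
  ext w; simpa using (theta_mem w v).2.le

lemma preimage_Iic (v : Circle') {t : ℝ} (ht : t ∈ Ico (0:ℝ) 1) :
    (fun w => theta w v) ⁻¹' Iic t = (fun s : ℝ => v - (s : Circle')) '' Icc 0 t := by
  ext w
  simp only [mem_preimage, mem_Iic, mem_image]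
  constructor
  · intro h
    refine ⟨theta w v, ⟨(theta_mem w v).1, h⟩, ?_⟩
    rw [coe_theta]; abel
  · rintro ⟨s, hs, rfl⟩
    have hs1 : s ∈ Ico (0:ℝ) 1 := ⟨hs.1, lt_of_le_of_lt hs.2 ht.2⟩
    have heq : v - (s : Circle') + (s:Circle') = v := by abel
    have h2 := theta_coe (v - (s : Circle')) hs1
    rw [heq] at h2
    rw [h2]; exact hs.2

lemma preimage_Ioi (v : Circle') {t : ℝ} (ht : t ∈ Ico (0:ℝ) 1) :
    (fun w => theta w v) ⁻¹' Ioi t = (fun s : ℝ => v - (s : Circle')) '' Ioo t 1 := by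
  ext w
  simp only [mem_preimage, mem_Ioi, mem_image]
  constructor
  · intro h
    refine ⟨theta w v, ⟨h, (theta_mem w v).2⟩, ?_⟩
    rw [coe_theta]; abel
  · rintro ⟨s, hs, rfl⟩
    have hs1 : s ∈ Ico (0:ℝ) 1 := ⟨le_of_lt (lt_of_le_of_lt ht.1 hs.1), hs.2⟩
    have heq : v - (s : Circle') + (s:Circle') = v := by abel
    have h2 := theta_coe (v - (s : Circle')) hs1
    rw [heq] at h2
    rw [h2]; exact hs.1

lemma frontier_subset (v : Circle') {t : ℝ} (ht : t ∈ Ico (0:ℝ) 1) :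
    frontier ((fun w => theta w v) ⁻¹' Iic t) ⊆ {v - (t : Circle'), v} := by
  have hcont : Continuous (fun s : ℝ => v - (s : Circle')) :=
    continuous_const.sub continuous_coe_circle
  have hE : IsClosed ((fun w => theta w v) ⁻¹' Iic t) := by
    rw [preimage_Iic v ht]
    exact (isCompact_Icc.image hcont).isClosed
  have hsub : closure (((fun w => theta w v) ⁻¹' Iic t)ᶜ)
      ⊆ (fun s : ℝ => v - (s : Circle')) '' Icc t 1 := by
    apply closure_minimal
    · rw [show (((fun w => theta w v) ⁻¹' Iic t)ᶜ : Set Circle') = (fun w => theta w v) ⁻¹' Ioi t from by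
        ext w; simp [not_le]]
      rw [preimage_Ioi v ht]
      exact image_mono Ioo_subset_Icc_self
    · exact (isCompact_Icc.image hcont).isClosed
  intro w hw
  rw [frontier_eq_closure_inter_closure, hE.closure_eq] at hw
  obtain ⟨hw1, hw2⟩ := hw
  rw [preimage_Iic v ht] at hw1
  obtain ⟨s, hs, rfl⟩ := hw1
  obtain ⟨s', hs', heq⟩ := hsub hw2
  rcases eq_or_lt_of_le hs'.2 with h1 | h1
  · have h10 : ((s' : ℝ) : Circle') = 0 := by
      rw [← h1]; simpa using AddCircle.coe_period (p := (1:ℝ))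
    have hv : v - ((s:ℝ) : Circle') = v := by
      have := heq
      simp only at this
      rw [h10] at this
      simpa using this.symm
    simp only [mem_insert_iff, mem_singleton_iff]
    right; exact hv
  · have hss : s = s' := by
      have : ((s : ℝ) : Circle') = ((s' : ℝ) : Circle') := by
        have h' : v - ((s':ℝ) : Circle') = v - ((s:ℝ) : Circle') := heq
        have := congrArg (fun z => v - z) (sub_right_injective h'.symm)
        exact sub_right_injective h'.symm ▸ rfl
      exact (coe_real_eq_coe_iff ⟨hs.1, lt_of_le_of_lt hs.2 ht.2⟩ ⟨le_trans ht.1 hs'.1, h1⟩).mp this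
    have hst : s = t := le_antisymm hs.2 (hss ▸ hs'.1)
    left; rw [hst]

lemma volume_singleton (x : Circle') : (volume : Measure Circle') {x} = 0 := by
  obtain ⟨x₀, _, rfl⟩ := AddCircle.eq_coe_Ico x
  have hmeas : MeasurableSet ({(x₀ : Circle')} : Set Circle') := measurableSet_singleton _
  rw [AddCircle.add_projection_respects_measure (1:ℝ) 0 hmeas]
  refine measure_mono_null (fun y hy => ?_) (Set.Countable.measure_zero
    (Set.countable_range (fun k : ℤ => x₀ + (k:ℝ))) volume)
  obtain ⟨hy1, _⟩ := hy
  have : (y : Circle') = (x₀ : Circle') := hy1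
  rw [QuotientAddGroup.eq_iff_sub_mem] at this
  obtain ⟨k, hk⟩ := AddSubgroup.mem_zmultiples_iff.mp this
  refine ⟨k, ?_⟩
  simp only [zsmul_eq_mul, mul_one] at hk
  show x₀ + (k:ℝ) = y
  linarith [hk]

lemma frontier_null {σ : Measure Circle'} (hac : σ ≪ (volume : Measure Circle'))
    (v : Circle') {t : ℝ} (ht : t ∈ Ico (0:ℝ) 1) :
    σ (frontier ((fun w => theta w v) ⁻¹' Iic t)) = 0 := by
  refine measure_mono_null (frontier_subset v ht) ?_
  refine measure_mono_null (by simp [Set.insert_subset_iff] : ({v - (t : Circle'), v} : Set Circle') ⊆ {v - (t : Circle')} ∪ {v}) ?_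
  refine le_antisymm ?_ bot_le
  calc σ ({v - (t : Circle')} ∪ {v}) ≤ σ {v - (t : Circle')} + σ {v} := measure_union_le _ _
  _ = 0 := by rw [hac (volume_singleton _), hac (volume_singleton _), add_zero]

lemma theta_zero_coe {s : ℝ} (hs : s ∈ Ico (0:ℝ) 1) : theta 0 ((s:ℝ) : Circle') = s := by
  have := theta_coe (0 : Circle') hs
  simpa using this

lemma volume_preimage_Ioc (v : Circle') (a b : ℝ) :
    (volume : Measure Circle') ((fun w => theta w v) ⁻¹' Ioc a b) ≤ ENNReal.ofReal (b - a) := by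
  have hmeas0 : Measurable (fun x : Circle' => theta 0 x) := by
    have h2 := (AddCircle.measurableEquivIco (T := (1:ℝ)) 0).measurable
    exact (measurable_subtype_coe.comp h2).comp (measurable_id.sub measurable_const)
  set U : Set Circle' := (fun x : Circle' => theta 0 x) ⁻¹' Ioc a b with hU
  have hUmeas : MeasurableSet U := hmeas0 measurableSet_Ioc
  have hpre : (fun w : Circle' => theta w v) ⁻¹' Ioc a b = (fun w : Circle' => v - w) ⁻¹' U := by
    ext w
    simp only [mem_preimage, hU, theta, sub_zero]
  have hinv : (volume : Measure Circle') ((fun w : Circle' => v - w) ⁻¹' U) = volume U := by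
    have hc : (fun w : Circle' => v - w) = (fun w : Circle' => -w) ∘ (fun w : Circle' => w + (-v)) := by
      funext w; simp [sub_eq_add_neg]; try abel
    rw [hc, Set.preimage_comp, measure_preimage_add_right]
    exact Measure.measure_preimage_neg _ _
  rw [hpre, hinv]
  rw [AddCircle.add_projection_respects_measure (1:ℝ) 0 hUmeas]
  have hsub : QuotientAddGroup.mk ⁻¹' U ∩ Ioc (0:ℝ) (0 + 1) ⊆ Ioc a b ∪ {1} := by
    rintro y ⟨hy1, hy2⟩
    rcases lt_or_eq_of_le hy2.2 with h | h
    · left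
      have : theta 0 ((y:ℝ) : Circle') = y := theta_zero_coe ⟨le_of_lt (by linarith [hy2.1]), by linarith⟩
      have hy1' : theta 0 ((y:ℝ) : Circle') ∈ Ioc a b := hy1
      rwa [this] at hy1'
    · right; simp only [mem_singleton_iff]; linarith
  calc (volume : Measure ℝ) (QuotientAddGroup.mk ⁻¹' U ∩ Ioc (0:ℝ) (0 + 1))
      ≤ volume (Ioc a b ∪ {(1:ℝ)}) := measure_mono hsub
    _ ≤ volume (Ioc a b) + volume ({(1:ℝ)} : Set ℝ) := measure_union_le _ _
    _ = ENNReal.ofReal (b - a) := by simp [Real.volume_Ioc]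

lemma mass_eq {m : ℝ} (hm : 0 < m) (ρ : ℕ → Measure Circle') [∀ n, IsFiniteMeasure (ρ n)]
    (hmass : ∀ n, ρ n Set.univ = ENNReal.ofReal m) (σ : Measure Circle') [IsFiniteMeasure σ]
    (hw : ∀ f : BoundedContinuousFunction Circle' ℝ,
      Tendsto (fun n => ∫ x, f x ∂(ρ n)) atTop (𝓝 (∫ x, f x ∂σ))) :
    σ Set.univ = ENNReal.ofReal m := by
  have h1 := hw 1
  simp only [BoundedContinuousFunction.coe_one, Pi.one_apply, integral_const, smul_eq_mul,
    mul_one] at h1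
  have h2 : ∀ n, (ρ n Set.univ).toReal = m := by
    intro n; rw [hmass n, ENNReal.toReal_ofReal hm.le]
  simp only [measureReal_def, h2] at h1
  have h3 : (σ Set.univ).toReal = m := tendsto_nhds_unique h1 tendsto_const_nhds
  rw [← h3, ENNReal.ofReal_toReal (measure_ne_top σ _)]

lemma conv_meas {m : ℝ} (hm : 0 < m) (ρ : ℕ → Measure Circle') [∀ n, IsFiniteMeasure (ρ n)]
    (hmass : ∀ n, ρ n Set.univ = ENNReal.ofReal m) (σ : Measure Circle') [IsFiniteMeasure σ]
    (hσm : σ Set.univ = ENNReal.ofReal m)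
    (hw : ∀ f : BoundedContinuousFunction Circle' ℝ,
      Tendsto (fun n => ∫ x, f x ∂(ρ n)) atTop (𝓝 (∫ x, f x ∂σ)))
    (E : Set Circle') (hE : σ (frontier E) = 0) :
    Tendsto (fun n => (ρ n E).toReal) atTop (𝓝 ((σ E).toReal)) := by
  have hm0 : ENNReal.ofReal m ≠ 0 := by simp [hm]
  have hmtop : ENNReal.ofReal m ≠ ⊤ := ENNReal.ofReal_ne_top
  set c : ℝ≥0∞ := (ENNReal.ofReal m)⁻¹ with hc
  have hc0 : c ≠ 0 := ENNReal.inv_ne_zero.mpr hmtop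
  have hctop : c ≠ ⊤ := ENNReal.inv_ne_top.mpr hm0
  have hprob : ∀ (μ : Measure Circle'), μ Set.univ = ENNReal.ofReal m →
      IsProbabilityMeasure (c • μ) := by
    intro μ h
    constructor
    rw [Measure.smul_apply, h, smul_eq_mul, hc, ENNReal.inv_mul_cancel hm0 hmtop]
  let P : ℕ → ProbabilityMeasure Circle' := fun n => ⟨c • ρ n, hprob _ (hmass n)⟩
  let Q : ProbabilityMeasure Circle' := ⟨c • σ, hprob _ hσm⟩
  have hPQ : Tendsto P atTop (𝓝 Q) := by
    rw [ProbabilityMeasure.tendsto_iff_forall_integral_tendsto]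
    intro f
    have hcoeP : ∀ n, (P n : Measure Circle') = c • ρ n := fun n => rfl
    have hcoeQ : (Q : Measure Circle') = c • σ := rfl
    simp only [hcoeP, hcoeQ, integral_smul_measure]
    exact Tendsto.const_smul (hw f) c.toReal
  have hQfront : (Q : Measure Circle') (frontier E) = 0 := by
    show (c • σ) (frontier E) = 0
    rw [Measure.smul_apply, hE, smul_zero]
  have key := MeasureTheory.ProbabilityMeasure.tendsto_measure_of_null_frontier_of_tendsto'
    hPQ hQfront
  have key2 : Tendsto (fun n => c * ρ n E) atTop (𝓝 (c * σ E)) := key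
  have key3 := ENNReal.Tendsto.const_mul key2 (Or.inr hmtop)
  have hcancel : ∀ x : ℝ≥0∞, ENNReal.ofReal m * (c * x) = x := by
    intro x
    rw [← mul_assoc, hc, ENNReal.mul_inv_cancel hm0 hmtop, one_mul]
  simp only [hcancel] at key3
  exact (ENNReal.tendsto_toReal (measure_ne_top σ E)).comp key3

lemma measure_split (μ : Measure Circle') [IsFiniteMeasure μ] (v : Circle') {a b : ℝ} (h : a ≤ b) :
    (μ ((fun w => theta w v) ⁻¹' Iic b)).toReal
      = (μ ((fun w => theta w v) ⁻¹' Iic a)).toReal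
        + (μ ((fun w => theta w v) ⁻¹' Ioc a b)).toReal := by
  rw [← ENNReal.toReal_add (measure_ne_top _ _) (measure_ne_top _ _)]
  congr 1
  rw [← measure_union ((Set.Iic_disjoint_Ioc le_rfl).preimage _)
    (measurable_F v measurableSet_Ioc), ← Set.preimage_union, Set.Iic_union_Ioc_eq_Iic h]

end S9

lemma flux_def (μ₁ μ₂ : Measure Circle') (v : Circle') :
    flux μ₁ μ₂ v = ⨆ u : Circle', max (excess μ₁ μ₂ u v) 0 := rfl

namespace S9

lemma bdd (μ₁ μ₂ : Measure Circle') [IsFiniteMeasure μ₁] (v : Circle') :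
    BddAbove (Set.range fun u => max (excess μ₁ μ₂ u v) 0) := by
  refine ⟨(μ₁ Set.univ).toReal, forall_mem_range.mpr fun u => ?_⟩
  refine max_le ?_ ENNReal.toReal_nonneg
  calc excess μ₁ μ₂ u v ≤ (μ₁ (arcCC u v)).toReal := by
        simp only [excess]; linarith [ENNReal.toReal_nonneg (a := μ₂ (arcCC u v))]
    _ ≤ (μ₁ Set.univ).toReal :=
        ENNReal.toReal_mono (measure_ne_top _ _) (measure_mono (subset_univ _))

lemma flux_nonneg (μ₁ μ₂ : Measure Circle') [IsFiniteMeasure μ₁] (v : Circle') :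
    0 ≤ flux μ₁ μ₂ v := by
  rw [flux_def]
  exact le_trans (le_max_right _ 0) (le_ciSup (bdd μ₁ μ₂ v) v)

end S9

/-- pointwise convergence of the fluxes under weak convergence of the
measures towards absolutely continuous limits. -/
theorem stmt9 (m₁ m₂ : ℝ) (hm₁ : 0 < m₁) (hm₂ : 0 < m₂) (hm : m₁ ≤ m₂)
    (ρ₁ ρ₂ : ℕ → Measure Circle')
    [∀ n, IsFiniteMeasure (ρ₁ n)] [∀ n, IsFiniteMeasure (ρ₂ n)]
    (hmass₁ : ∀ n, ρ₁ n Set.univ = ENNReal.ofReal m₁)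
    (hmass₂ : ∀ n, ρ₂ n Set.univ = ENNReal.ofReal m₂)
    (σ₁ σ₂ : Measure Circle') [IsFiniteMeasure σ₁] [IsFiniteMeasure σ₂]
    (hac₁ : σ₁ ≪ (volume : Measure Circle')) (hac₂ : σ₂ ≪ (volume : Measure Circle'))
    (hw₁ : ∀ f : BoundedContinuousFunction Circle' ℝ,
      Filter.Tendsto (fun n => ∫ x, f x ∂(ρ₁ n)) Filter.atTop (nhds (∫ x, f x ∂σ₁)))
    (hw₂ : ∀ f : BoundedContinuousFunction Circle' ℝ,
      Filter.Tendsto (fun n => ∫ x, f x ∂(ρ₂ n)) Filter.atTop (nhds (∫ x, f x ∂σ₂))) :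
    ∀ v : Circle',
      Filter.Tendsto (fun n => flux (ρ₁ n) (ρ₂ n) v) Filter.atTop (nhds (flux σ₁ σ₂ v)) := by
  intro v
  have hσ₁m : σ₁ Set.univ = ENNReal.ofReal m₁ := S9.mass_eq hm₁ ρ₁ hmass₁ σ₁ hw₁
  have hσ₂m : σ₂ Set.univ = ENNReal.ofReal m₂ := S9.mass_eq hm₂ ρ₂ hmass₂ σ₂ hw₂
  have hconv₁ : ∀ E : Set Circle', σ₁ (frontier E) = 0 →
      Tendsto (fun n => (ρ₁ n E).toReal) atTop (𝓝 ((σ₁ E).toReal)) :=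
    fun E hE => S9.conv_meas hm₁ ρ₁ hmass₁ σ₁ hσ₁m hw₁ E hE
  have hconv₂ : ∀ E : Set Circle', σ₂ (frontier E) = 0 →
      Tendsto (fun n => (ρ₂ n E).toReal) atTop (𝓝 ((σ₂ E).toReal)) :=
    fun E hE => S9.conv_meas hm₂ ρ₂ hmass₂ σ₂ hσ₂m hw₂ E hE
  have hbn : ∀ n, BddAbove (Set.range fun u => max (excess (ρ₁ n) (ρ₂ n) u v) 0) :=
    fun n => S9.bdd _ _ v
  have hbσ : BddAbove (Set.range fun u => max (excess σ₁ σ₂ u v) 0) := S9.bdd _ _ v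
  have hfluxσ0 : 0 ≤ flux σ₁ σ₂ v := S9.flux_nonneg _ _ v
  rw [Metric.tendsto_atTop]
  intro ε hε
  -- lower bound
  have hlow : ∀ᶠ n in atTop, flux σ₁ σ₂ v - ε / 2 ≤ flux (ρ₁ n) (ρ₂ n) v := by
    have hlt : flux σ₁ σ₂ v - ε / 2 < ⨆ u : Circle', max (excess σ₁ σ₂ u v) 0 := by
      rw [← flux_def]; linarith
    obtain ⟨u, hu⟩ := exists_lt_of_lt_ciSup hlt
    have harc : arcCC u v = (fun w => theta w v) ⁻¹' Iic (theta u v) := S9.arcCC_eq u v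
    have h1 := hconv₁ (arcCC u v) (by rw [harc]; exact S9.frontier_null hac₁ v (S9.theta_mem u v))
    have h2 := hconv₂ (arcCC u v) (by rw [harc]; exact S9.frontier_null hac₂ v (S9.theta_mem u v))
    have hexc : Tendsto (fun n => excess (ρ₁ n) (ρ₂ n) u v) atTop (𝓝 (excess σ₁ σ₂ u v)) :=
      h1.sub h2
    have hmax : Tendsto (fun n => max (excess (ρ₁ n) (ρ₂ n) u v) 0) atTop
        (𝓝 (max (excess σ₁ σ₂ u v) 0)) := hexc.max tendsto_const_nhds
    filter_upwards [hmax.eventually (eventually_gt_nhds hu)] with n hn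
    calc flux σ₁ σ₂ v - ε / 2 ≤ max (excess (ρ₁ n) (ρ₂ n) u v) 0 := hn.le
      _ ≤ flux (ρ₁ n) (ρ₂ n) v := by rw [flux_def]; exact le_ciSup (hbn n) u
  -- upper bound
  have hup : ∀ᶠ n in atTop, flux (ρ₁ n) (ρ₂ n) v ≤ flux σ₁ σ₂ v + ε / 2 := by
    set ε' : ℝ := ε / 16 with hε'def
    have hε' : 0 < ε' := by positivity
    -- absolute continuity modulus
    have hmod : ∀ (σ : Measure Circle'), IsFiniteMeasure σ → σ ≪ (volume : Measure Circle') →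
        ∃ δ : ℝ≥0∞, 0 < δ ∧ ∀ s : Set Circle', MeasurableSet s → volume s < δ →
          σ s < ENNReal.ofReal ε' := by
      intro σ hfin hac
      have hrn : ∫⁻ x, σ.rnDeriv volume x ∂(volume : Measure Circle') ≠ ⊤ :=
        (Measure.lintegral_rnDeriv_lt_top σ _).ne
      obtain ⟨δ, hδ0, hδ⟩ := exists_pos_setLIntegral_lt_of_measure_lt hrn
        (show (ENNReal.ofReal ε') ≠ 0 by simp [hε'])
      refine ⟨δ, hδ0, fun s hs hvs => ?_⟩
      have hσs : σ s = ∫⁻ x in s, σ.rnDeriv volume x ∂(volume : Measure Circle') := by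
        conv_lhs => rw [← Measure.withDensity_rnDeriv_eq σ volume hac]
        rw [withDensity_apply _ hs]
      rw [hσs]; exact hδ s hvs
    obtain ⟨δ₁, hδ₁0, hδ₁⟩ := hmod σ₁ inferInstance hac₁
    obtain ⟨δ₂, hδ₂0, hδ₂⟩ := hmod σ₂ inferInstance hac₂
    obtain ⟨N, hN⟩ := ENNReal.exists_inv_nat_lt (ne_of_gt (lt_min hδ₁0 hδ₂0))
    set M : ℕ := N + 1 with hMdef
    have hM0 : 0 < M := Nat.succ_pos N
    have hMr : (0:ℝ) < (M:ℝ) := by exact_mod_cast hM0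
    -- volume of small arcs
    have hvol : ∀ i : ℕ, (volume : Measure Circle')
        ((fun w => theta w v) ⁻¹' Ioc ((i:ℝ)/(M:ℝ)) (((i:ℝ)+1)/(M:ℝ))) < min δ₁ δ₂ := by
      intro i
      refine lt_of_le_of_lt ?_ hN
      calc (volume : Measure Circle') ((fun w => theta w v) ⁻¹' Ioc ((i:ℝ)/(M:ℝ)) (((i:ℝ)+1)/(M:ℝ)))
          ≤ ENNReal.ofReal (((i:ℝ)+1)/(M:ℝ) - (i:ℝ)/(M:ℝ)) := S9.volume_preimage_Ioc v _ _
        _ = ENNReal.ofReal (((M:ℝ))⁻¹) := by congr 1; field_simp; ring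
        _ = ((M:ℕ) : ℝ≥0∞)⁻¹ := by
            rw [ENNReal.ofReal_inv_of_pos hMr, ENNReal.ofReal_natCast]
        _ ≤ ((N:ℕ) : ℝ≥0∞)⁻¹ := by
            apply ENNReal.inv_le_inv.mpr
            exact_mod_cast Nat.cast_le.mpr (Nat.le_succ N)
    -- grid sigma bounds
    have hgridσ₁ : ∀ i : ℕ, σ₁ ((fun w => theta w v) ⁻¹' Ioc ((i:ℝ)/(M:ℝ)) (((i:ℝ)+1)/(M:ℝ)))
        < ENNReal.ofReal ε' := fun i =>
      hδ₁ _ (S9.measurable_F v measurableSet_Ioc) (lt_of_lt_of_le (hvol i) (min_le_left _ _))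
    have hgridσ₂ : ∀ i : ℕ, σ₂ ((fun w => theta w v) ⁻¹' Ioc ((i:ℝ)/(M:ℝ)) (((i:ℝ)+1)/(M:ℝ)))
        < ENNReal.ofReal ε' := fun i =>
      hδ₂ _ (S9.measurable_F v measurableSet_Ioc) (lt_of_lt_of_le (hvol i) (min_le_right _ _))
    -- frontier-null at grid points
    have hfront : ∀ (σ : Measure Circle'), σ ≪ (volume : Measure Circle') → ∀ i : ℕ, i ≤ M →
        σ (frontier ((fun w => theta w v) ⁻¹' Iic ((i:ℝ)/(M:ℝ)))) = 0 := by
      intro σ hac i hi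
      rcases lt_or_eq_of_le hi with h | h
      · exact S9.frontier_null hac v ⟨by positivity, by
          rw [div_lt_one hMr]; exact_mod_cast h⟩
      · have : ((i:ℝ)/(M:ℝ)) = 1 := by rw [h]; field_simp
        rw [this, S9.preimage_Iic_one, frontier_univ, measure_empty]
    -- eventually all grid approximations
    have hev₁ : ∀ᶠ n in atTop, ∀ i ∈ Finset.range (M+1),
        |(ρ₁ n ((fun w => theta w v) ⁻¹' Iic ((i:ℝ)/(M:ℝ)))).toReal
          - (σ₁ ((fun w => theta w v) ⁻¹' Iic ((i:ℝ)/(M:ℝ)))).toReal| < ε' := by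
      rw [eventually_all_finset]
      intro i hi
      have hi' : i ≤ M := Nat.lt_succ_iff.mp (Finset.mem_range.mp hi)
      exact (hconv₁ _ (hfront σ₁ hac₁ i hi')).eventually (eventually_abs_sub_lt _ hε')
    have hev₂ : ∀ᶠ n in atTop, ∀ i ∈ Finset.range (M+1),
        |(ρ₂ n ((fun w => theta w v) ⁻¹' Iic ((i:ℝ)/(M:ℝ)))).toReal
          - (σ₂ ((fun w => theta w v) ⁻¹' Iic ((i:ℝ)/(M:ℝ)))).toReal| < ε' := by
      rw [eventually_all_finset]
      intro i hi
      have hi' : i ≤ M := Nat.lt_succ_iff.mp (Finset.mem_range.mp hi)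
      exact (hconv₂ _ (hfront σ₂ hac₂ i hi')).eventually (eventually_abs_sub_lt _ hε')
    filter_upwards [hev₁, hev₂] with n h₁ h₂
    rw [flux_def]
    refine ciSup_le fun u => ?_
    refine max_le ?_ (by linarith)
    -- the grid index for u
    have ht := S9.theta_mem u v
    set t : ℝ := theta u v with htdef
    set i : ℕ := ⌊t * (M:ℝ)⌋₊ with hidef
    have htM0 : 0 ≤ t * (M:ℝ) := mul_nonneg ht.1 hMr.le
    have hiM : i < M := by
      rw [hidef]
      rw [Nat.floor_lt htM0]
      calc t * (M:ℝ) < 1 * (M:ℝ) := by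
            apply mul_lt_mul_of_pos_right ht.2 hMr
        _ = (M:ℝ) := one_mul _
    have hle1 : (i:ℝ)/(M:ℝ) ≤ t := by
      rw [div_le_iff₀ hMr]
      exact Nat.floor_le htM0
    have hle2 : t ≤ ((i:ℝ)+1)/(M:ℝ) := by
      rw [le_div_iff₀ hMr]
      exact (Nat.lt_floor_add_one (t * (M:ℝ))).le
    have hiIc : i ∈ Finset.range (M+1) := Finset.mem_range.mpr (Nat.lt_succ_of_lt hiM)
    have hi1Ic : i + 1 ∈ Finset.range (M+1) := Finset.mem_range.mpr (Nat.succ_lt_succ hiM)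
    have harc : arcCC u v = (fun w => theta w v) ⁻¹' Iic t := S9.arcCC_eq u v
    -- shorthand
    have hcast : ((i+1 : ℕ) : ℝ) = (i:ℝ) + 1 := by push_cast; ring
    have hb₁ := h₁ (i+1) hi1Ic
    have hb₁' := h₁ i hiIc
    have hb₂ := h₂ (i+1) hi1Ic
    have hb₂' := h₂ i hiIc
    rw [hcast] at hb₁ hb₂
    have hgs₁ : (σ₁ ((fun w => theta w v) ⁻¹' Ioc ((i:ℝ)/(M:ℝ)) (((i:ℝ)+1)/(M:ℝ)))).toReal ≤ ε' :=
      ENNReal.toReal_le_of_le_ofReal hε'.le (hgridσ₁ i).le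
    have hgs₂ : (σ₂ ((fun w => theta w v) ⁻¹' Ioc ((i:ℝ)/(M:ℝ)) (((i:ℝ)+1)/(M:ℝ)))).toReal ≤ ε' :=
      ENNReal.toReal_le_of_le_ofReal hε'.le (hgridσ₂ i).le
    have hsplit₁ := S9.measure_split σ₁ v (show (i:ℝ)/(M:ℝ) ≤ ((i:ℝ)+1)/(M:ℝ) from
      (div_le_div_iff_of_pos_right hMr).mpr (by linarith))
    have hsplit₂ := S9.measure_split σ₂ v (show (i:ℝ)/(M:ℝ) ≤ ((i:ℝ)+1)/(M:ℝ) from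
      (div_le_div_iff_of_pos_right hMr).mpr (by linarith))
    -- monotonicity of measures
    have hmono : ∀ (μ : Measure Circle'), IsFiniteMeasure μ → ∀ {s s' : ℝ}, s ≤ s' →
        (μ ((fun w => theta w v) ⁻¹' Iic s)).toReal ≤ (μ ((fun w => theta w v) ⁻¹' Iic s')).toReal := by
      intro μ hfin s s' hss
      exact ENNReal.toReal_mono (measure_ne_top _ _)
        (measure_mono (preimage_mono (Iic_subset_Iic.mpr hss)))
    -- key bound 1
    have key₁ : (ρ₁ n (arcCC u v)).toReal ≤ (σ₁ (arcCC u v)).toReal + 2*ε' := by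
      rw [harc]
      calc (ρ₁ n ((fun w => theta w v) ⁻¹' Iic t)).toReal
          ≤ (ρ₁ n ((fun w => theta w v) ⁻¹' Iic (((i:ℝ)+1)/(M:ℝ)))).toReal :=
            hmono (ρ₁ n) inferInstance hle2
        _ ≤ (σ₁ ((fun w => theta w v) ⁻¹' Iic (((i:ℝ)+1)/(M:ℝ)))).toReal + ε' := by
            have := abs_sub_lt_iff.mp hb₁
            linarith [this.1]
        _ = (σ₁ ((fun w => theta w v) ⁻¹' Iic ((i:ℝ)/(M:ℝ)))).toReal
              + (σ₁ ((fun w => theta w v) ⁻¹' Ioc ((i:ℝ)/(M:ℝ)) (((i:ℝ)+1)/(M:ℝ)))).toReal + ε' := by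
            rw [hsplit₁]
        _ ≤ (σ₁ ((fun w => theta w v) ⁻¹' Iic t)).toReal + 2*ε' := by
            have := hmono σ₁ inferInstance hle1
            linarith
    -- key bound 2
    have key₂ : (σ₂ (arcCC u v)).toReal ≤ (ρ₂ n (arcCC u v)).toReal + 2*ε' := by
      rw [harc]
      calc (σ₂ ((fun w => theta w v) ⁻¹' Iic t)).toReal
          ≤ (σ₂ ((fun w => theta w v) ⁻¹' Iic (((i:ℝ)+1)/(M:ℝ)))).toReal :=
            hmono σ₂ inferInstance hle2
        _ = (σ₂ ((fun w => theta w v) ⁻¹' Iic ((i:ℝ)/(M:ℝ)))).toReal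
              + (σ₂ ((fun w => theta w v) ⁻¹' Ioc ((i:ℝ)/(M:ℝ)) (((i:ℝ)+1)/(M:ℝ)))).toReal := hsplit₂
        _ ≤ (σ₂ ((fun w => theta w v) ⁻¹' Iic ((i:ℝ)/(M:ℝ)))).toReal + ε' := by linarith
        _ ≤ (ρ₂ n ((fun w => theta w v) ⁻¹' Iic ((i:ℝ)/(M:ℝ)))).toReal + 2*ε' := by
            have := abs_sub_lt_iff.mp hb₂'
            linarith [this.2]
        _ ≤ (ρ₂ n ((fun w => theta w v) ⁻¹' Iic t)).toReal + 2*ε' := by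
            have := hmono (ρ₂ n) inferInstance hle1
            linarith
    have hexcσ : excess σ₁ σ₂ u v ≤ flux σ₁ σ₂ v := by
      rw [flux_def]
      exact le_trans (le_max_left _ 0) (le_ciSup hbσ u)
    have : excess (ρ₁ n) (ρ₂ n) u v ≤ excess σ₁ σ₂ u v + 4*ε' := by
      simp only [excess] at *
      linarith
    have hfin : excess (ρ₁ n) (ρ₂ n) u v ≤ flux σ₁ σ₂ v + ε / 2 := by
      rw [hε'def] at this
      linarith
    exact hfin
  -- combine
  obtain ⟨N₁, hN₁⟩ := eventually_atTop.mp hlow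
  obtain ⟨N₂, hN₂⟩ := eventually_atTop.mp hup
  refine ⟨max N₁ N₂, fun n hn => ?_⟩
  have e1 := hN₁ n (le_trans (le_max_left _ _) hn)
  have e2 := hN₂ n (le_trans (le_max_right _ _) hn)
  rw [Real.dist_eq]
  rw [abs_sub_lt_iff]
  constructor <;> linarith


end
end

section
/- Let m₁ ≤ m₂ be positive real numbers. Let (ρ₁⁽ⁿ⁾)ₙ and (ρ₂⁽ⁿ⁾)ₙ be sequences of finite positive Borel measures on the circle Λ with ρ₁⁽ⁿ⁾(Λ) = m₁ and ρ₂⁽ⁿ⁾(Λ) = m₂, converging weakly to measures ρ₁ and ρ₂ respectively, where ρ₁ and ρ₂ are absolutely continuous with respect to Haar measure. Then the collapsed measures converge on arcs: for every half-open arc (a,b] ⊆ Λ, ρ₁⁽ⁿ⁾((a,b]) + Jⁿ(a) − Jⁿ(b) → ρ₁((a,b]) + J(a) − J(b) as n → ∞, where Jⁿ is the flux associated to the pair (ρ₁⁽ⁿ⁾, ρ₂⁽ⁿ⁾) and J the flux associated to (ρ₁, ρ₂). -/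
open MeasureTheory Set Filter Topology

noncomputable section

namespace StmtAux

lemma theta_mem (u w : Circle') : theta u w ∈ Set.Ico (0:ℝ) 1 := by
  have := (AddCircle.equivIco 1 0 (w - u)).2
  simpa [theta] using this

lemma coe_theta (u w : Circle') : ((theta u w : ℝ) : Circle') = w - u :=
  (AddCircle.equivIco 1 0).symm_apply_apply (w - u)

lemma theta_add_coe (u : Circle') (r : ℝ) : theta u (u + (r : ℝ)) = Int.fract r := by
  have : (u + (r:ℝ)) - u = ((r:ℝ) : Circle') := by abel
  rw [theta, this]
  have := AddCircle.coe_equivIco_mk_apply (p := (1:ℝ)) r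
  simpa using this

lemma theta_self (u : Circle') : theta u u = 0 := by
  have := theta_add_coe u 0
  simpa using this

lemma theta_eq_zero_iff {u w : Circle'} : theta u w = 0 ↔ w = u := by
  constructor
  · intro h
    have h2 := coe_theta u w
    rw [h] at h2
    have : w - u = 0 := by rw [← h2]; norm_cast
    exact sub_eq_zero.mp this
  · rintro rfl; exact theta_self _

lemma eq_add_theta (u w : Circle') : w = u + ((theta u w : ℝ) : Circle') := by
  rw [coe_theta]; abel

lemma add_add_coe (z : Circle') (a b : ℝ) :
    (z + (a:ℝ)) + ((b:ℝ) : Circle') = z + ((a + b : ℝ) : Circle') := by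
  rw [add_assoc, ← AddCircle.coe_add]

lemma mem_arcCC_right (u v : Circle') : v ∈ arcCC u v := le_refl (theta u v)

lemma arcCC_self (v : Circle') : arcCC v v = {v} := by
  ext w
  simp only [arcCC, mem_setOf_eq, theta_self, mem_singleton_iff]
  constructor
  · intro h
    exact theta_eq_zero_iff.mp (le_antisymm h (theta_mem v w).1)
  · rintro rfl; simp [theta_self]

/-- Key characterization: for `s ∈ (0,1)`, the arc `[v+s, v]` is
`{w | θ_v w = 0 ∨ s ≤ θ_v w}`. -/
lemma arcCC_shift {v : Circle'} {s : ℝ} (h0 : 0 < s) (h1 : s < 1) :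
    arcCC (v + (s:ℝ)) v = {w | theta v w = 0 ∨ s ≤ theta v w} := by
  have hfs : Int.fract s = s := Int.fract_eq_self.mpr ⟨h0.le, h1⟩
  have htv : theta (v + (s:ℝ)) v = 1 - s := by
    set u' := v + ((s:ℝ) : Circle') with hu'
    have hv : v = u' + ((-s : ℝ) : Circle') := by
      rw [hu', add_add_coe]; simp
    rw [hv, theta_add_coe]
    rw [Int.fract_neg (by rw [hfs]; exact h0.ne')]
    rw [hfs]
  ext w
  have hx0 := (theta_mem v w).1
  have hx1 := (theta_mem v w).2
  set x := theta v w with hxdef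
  have hw : w = (v + (s:ℝ)) + ((x - s : ℝ) : Circle') := by
    rw [add_add_coe]
    have : s + (x - s) = x := by ring
    rw [this, hxdef]
    exact eq_add_theta v w
  have htw : theta (v + (s:ℝ)) w = Int.fract (x - s) := by
    set u' := v + ((s:ℝ) : Circle') with hu'
    rw [hw, theta_add_coe]
  simp only [arcCC, mem_setOf_eq, htv, htw]
  rcases le_or_gt s x with hsx | hsx
  · have : Int.fract (x - s) = x - s := Int.fract_eq_self.mpr ⟨by linarith, by linarith⟩
    rw [this]
    constructor
    · intro _; right; exact hsx
    · intro _; linarith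
  · have : Int.fract (x - s) = x - s + 1 := by
      have : Int.fract (x - s) = Int.fract (x - s + 1) := by
        rw [Int.fract_add_one]
      rw [this, Int.fract_eq_self.mpr ⟨by linarith, by linarith⟩]
    rw [this]
    constructor
    · intro h
      left
      linarith
    · rintro (h | h)
      · linarith
      · linarith

lemma arcCC_shift_subset {v : Circle'} {s t : ℝ} (h0 : 0 < s) (hst : s ≤ t) (h1 : t < 1) :
    arcCC (v + (t:ℝ)) v ⊆ arcCC (v + (s:ℝ)) v := by
  rw [arcCC_shift (lt_of_lt_of_le h0 hst) h1, arcCC_shift h0 (lt_of_le_of_lt hst h1)]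
  rintro w (h | h)
  · exact Or.inl h
  · exact Or.inr (le_trans hst h)

lemma arcCC_shift_diff_subset {v : Circle'} {s t : ℝ} (h0 : 0 < s) (hst : s ≤ t) (h1 : t < 1) :
    arcCC (v + (s:ℝ)) v \ arcCC (v + (t:ℝ)) v ⊆
      {w | s ≤ theta v w ∧ theta v w ≤ t} := by
  rw [arcCC_shift (lt_of_lt_of_le h0 hst) h1, arcCC_shift h0 (lt_of_le_of_lt hst h1)]
  rintro w ⟨h1', h2'⟩
  simp only [mem_setOf_eq, not_or, not_le] at h2' ⊢
  rcases h1' with h | h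
  · exact absurd h h2'.1
  · exact ⟨h, h2'.2.le⟩

lemma arcCC_eq_image (u v : Circle') :
    arcCC u v = (fun t : ℝ => u + (t : ℝ)) '' Set.Icc 0 (theta u v) := by
  ext w
  constructor
  · intro h
    exact ⟨theta u w, ⟨(theta_mem u w).1, h⟩, (eq_add_theta u w).symm⟩
  · rintro ⟨t, ⟨ht0, ht1⟩, rfl⟩
    have : theta u (u + (t:ℝ)) = t := by
      rw [theta_add_coe, Int.fract_eq_self.mpr ⟨ht0, lt_of_le_of_lt ht1 (theta_mem u v).2⟩]
    simpa [arcCC, this] using ht1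

lemma arcOO_eq_image (u v : Circle') :
    arcOO u v = (fun t : ℝ => u + (t : ℝ)) '' Set.Ioo 0 (theta u v) := by
  ext w
  constructor
  · rintro ⟨h1, h2⟩
    exact ⟨theta u w, ⟨h1, h2⟩, (eq_add_theta u w).symm⟩
  · rintro ⟨t, ⟨ht0, ht1⟩, rfl⟩
    have : theta u (u + (t:ℝ)) = t := by
      rw [theta_add_coe, Int.fract_eq_self.mpr ⟨ht0.le, lt_trans ht1 (theta_mem u v).2⟩]
    exact ⟨by rw [this]; exact ht0, by rw [this]; exact ht1⟩

lemma continuous_param (u : Circle') : Continuous (fun t : ℝ => u + (t : ℝ)) :=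
  continuous_const.add (AddCircle.continuous_mk' 1)

lemma isClosed_arcCC (u v : Circle') : IsClosed (arcCC u v) := by
  rw [arcCC_eq_image]
  exact (isCompact_Icc.image (continuous_param u)).isClosed

lemma isOpen_arcOO (u v : Circle') : IsOpen (arcOO u v) := by
  rw [arcOO_eq_image]
  have : IsOpenMap (fun t : ℝ => u + (t : ℝ)) := by
    have h1 : IsOpenMap (QuotientAddGroup.mk : ℝ → Circle') := by
      intro s hs
      exact QuotientAddGroup.isOpenMap_coe s hs
    have h2 : IsOpenMap (fun z : Circle' => u + z) :=
      (Homeomorph.addLeft u).isOpenMap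
    exact h2.comp h1
  exact this _ isOpen_Ioo

lemma arcOC_eq (u v : Circle') : arcOC u v = arcCC u v \ {u} := by
  ext w
  simp only [arcOC, arcCC, mem_setOf_eq, mem_diff, mem_singleton_iff]
  constructor
  · rintro ⟨h1, h2⟩
    exact ⟨h2, fun hw => by rw [hw, theta_self] at h1; exact lt_irrefl _ h1⟩
  · rintro ⟨h1, h2⟩
    refine ⟨lt_of_le_of_ne (theta_mem u w).1 ?_, h1⟩
    intro h
    exact h2 (theta_eq_zero_iff.mp h.symm)

lemma measurableSet_arcCC (u v : Circle') : MeasurableSet (arcCC u v) :=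
  (isClosed_arcCC u v).measurableSet

lemma measurableSet_arcOC (u v : Circle') : MeasurableSet (arcOC u v) := by
  rw [arcOC_eq]
  exact (measurableSet_arcCC u v).diff (measurableSet_singleton u)

lemma arcCC_diff_arcOO (u v : Circle') : arcCC u v \ arcOO u v ⊆ {u, v} := by
  rintro w ⟨h1, h2⟩
  simp only [arcOO, mem_setOf_eq, not_and, not_lt] at h2
  simp only [mem_insert_iff, mem_singleton_iff]
  rcases lt_or_eq_of_le (theta_mem u w).1 with hpos | heq
  · have := h2 hpos
    have hwv : theta u w = theta u v := le_antisymm h1 this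
    right
    have e1 := eq_add_theta u w
    have e2 := eq_add_theta u v
    rw [hwv] at e1
    rw [e1, ← e2]
  · left; exact theta_eq_zero_iff.mp heq.symm

lemma frontier_arcCC_subset (u v : Circle') : frontier (arcCC u v) ⊆ {u, v} := by
  have h1 : closure (arcCC u v) = arcCC u v := (isClosed_arcCC u v).closure_eq
  have h2 : arcOO u v ⊆ interior (arcCC u v) := by
    apply interior_maximal _ (isOpen_arcOO u v)
    rintro w ⟨_, hw⟩; exact hw.le
  refine subset_trans ?_ (arcCC_diff_arcOO u v)
  rw [frontier, h1]
  exact diff_subset_diff_right h2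

lemma frontier_arcOC_subset (u v : Circle') : frontier (arcOC u v) ⊆ {u, v} := by
  have h1 : closure (arcOC u v) ⊆ arcCC u v := by
    apply closure_minimal _ (isClosed_arcCC u v)
    rintro w ⟨_, hw⟩; exact hw
  have h2 : arcOO u v ⊆ interior (arcOC u v) := by
    apply interior_maximal _ (isOpen_arcOO u v)
    rintro w ⟨hw1, hw2⟩; exact ⟨hw1, hw2.le⟩
  refine subset_trans ?_ (arcCC_diff_arcOO u v)
  exact diff_subset_diff h1 h2


/-! ### Measure lemmas -/

lemma measurable_theta (v : Circle') : Measurable (theta v) := by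
  have h1 : Measurable (fun w : Circle' => w - v) := by
    have : (fun w : Circle' => w - v) = fun w => w + (-v) := by
      funext w; rw [sub_eq_add_neg]
    rw [this]
    exact measurable_add_const _
  have h2 : Measurable (fun z : Circle' => ((AddCircle.equivIco 1 0) z : ℝ)) := by
    have := (AddCircle.measurableEquivIco (1:ℝ) 0).measurable
    exact measurable_subtype_coe.comp this
  exact h2.comp h1

lemma volume_band (v : Circle') {s t : ℝ} (hst : s ≤ t) :
    volume {w : Circle' | s ≤ theta v w ∧ theta v w ≤ t} ≤ ENNReal.ofReal (t - s) := by
  set B : Set Circle' := {z | s ≤ ((AddCircle.equivIco 1 0) z : ℝ) ∧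
      ((AddCircle.equivIco 1 0) z : ℝ) ≤ t} with hB
  have hmeasB : MeasurableSet B := by
    have h2 : Measurable (fun z : Circle' => ((AddCircle.equivIco 1 0) z : ℝ)) :=
      measurable_subtype_coe.comp (AddCircle.measurableEquivIco (1:ℝ) 0).measurable
    exact (measurableSet_le measurable_const h2).inter (measurableSet_le h2 measurable_const)
  have hpre : {w : Circle' | s ≤ theta v w ∧ theta v w ≤ t} =
      (fun w : Circle' => -v + w) ⁻¹' B := by
    ext w
    simp only [hB, mem_setOf_eq, mem_preimage, theta]
    constructor
    · intro h; rwa [show -v + w = w - v by abel]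
    · intro h; rwa [show -v + w = w - v by abel] at h
  rw [hpre, measure_preimage_add]
  have hproj := AddCircle.add_projection_respects_measure (T := 1) 0 hmeasB
  rw [hproj]
  have hsub : QuotientAddGroup.mk ⁻¹' B ∩ Ioc (0:ℝ) (0 + 1) ⊆ Icc s t ∪ {1} := by
    rintro x ⟨hx1, hx2⟩
    rw [zero_add] at hx2
    rcases lt_or_eq_of_le hx2.2 with hlt | heq
    · left
      have : ((QuotientAddGroup.mk x : Circle')) = (0:Circle') + ((x:ℝ) : Circle') := by
        simp
      simp only [mem_preimage, hB, mem_setOf_eq] at hx1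
      have hth : ((AddCircle.equivIco 1 0) (QuotientAddGroup.mk x) : ℝ) = x := by
        have h0 : theta 0 ((0:Circle') + ((x:ℝ) : Circle')) = Int.fract x := theta_add_coe 0 x
        have : theta 0 (QuotientAddGroup.mk x) = Int.fract x := by
          rw [show ((QuotientAddGroup.mk x : Circle')) = (0:Circle') + ((x:ℝ) : Circle') by simp]
          exact h0
        simp only [theta, sub_zero] at this
        rw [this, Int.fract_eq_self.mpr ⟨hx2.1.le, hlt⟩]
      rw [hth] at hx1
      exact hx1
    · right; simp [← heq]
  calc volume (QuotientAddGroup.mk ⁻¹' B ∩ Ioc (0:ℝ) (0 + 1))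
      ≤ volume (Icc s t ∪ ({1} : Set ℝ)) := measure_mono hsub
    _ ≤ volume (Icc s t) + volume ({1} : Set ℝ) := measure_union_le _ _
    _ = ENNReal.ofReal (t - s) := by simp [Real.volume_Icc]

lemma volume_singleton (x : Circle') : volume ({x} : Set Circle') = 0 := by
  have h : ({x} : Set Circle') ⊆ {w : Circle' | 0 ≤ theta x w ∧ theta x w ≤ 0} := by
    rintro w rfl
    exact ⟨(theta_mem _ _).1, le_of_eq (theta_self _)⟩
  have := le_trans (measure_mono h) (volume_band x (le_refl 0))
  simpa using this

lemma uniformAC (σ : Measure Circle') [IsFiniteMeasure σ] (hac : σ ≪ (volume : Measure Circle'))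
    {ε : ℝ} (hε : 0 < ε) :
    ∃ δ : ℝ, 0 < δ ∧ ∀ S : Set Circle', MeasurableSet S →
      volume S ≤ ENNReal.ofReal δ → (σ S).toReal ≤ ε := by
  obtain ⟨δ', hδ'pos, hδ'⟩ := exists_pos_setLIntegral_lt_of_measure_lt
    (μ := (volume : Measure Circle')) (f := σ.rnDeriv volume)
    (Measure.lintegral_rnDeriv_lt_top σ volume).ne
    (ε := ENNReal.ofReal ε) (by simp [hε])
  set d : ENNReal := min 1 δ' with hd
  have hdpos : 0 < d := lt_min zero_lt_one hδ'pos
  have hdne : d ≠ ⊤ := ne_top_of_le_ne_top ENNReal.one_ne_top (min_le_left _ _)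
  have hdr : 0 < d.toReal := ENNReal.toReal_pos hdpos.ne' hdne
  refine ⟨d.toReal / 2, by linarith, ?_⟩
  · intro S hS hvol
    have hlt : volume S < δ' := by
      calc volume S ≤ ENNReal.ofReal (d.toReal / 2) := hvol
        _ < d := by
          rw [ENNReal.ofReal_lt_iff_lt_toReal (by linarith) hdne]
          linarith
        _ ≤ δ' := min_le_right _ _
    have := hδ' S hlt
    rw [Measure.setLIntegral_rnDeriv' hac hS] at this
    calc (σ S).toReal ≤ (ENNReal.ofReal ε).toReal :=
          ENNReal.toReal_mono (by simp) this.le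
      _ = ε := ENNReal.toReal_ofReal hε.le

/-! ### Portmanteau for finite measures of constant mass -/

lemma portmanteau {c : ENNReal} (hc : c ≠ ⊤) (μ : Measure Circle') (μs : ℕ → Measure Circle')
    [IsFiniteMeasure μ] [∀ n, IsFiniteMeasure (μs n)]
    (hmass : ∀ n, μs n Set.univ = c) (hmassμ : μ Set.univ = c)
    (hw : ∀ f : BoundedContinuousFunction Circle' ℝ,
      Tendsto (fun n => ∫ x, f x ∂(μs n)) atTop (𝓝 (∫ x, f x ∂μ)))
    {E : Set Circle'} (hE : μ (frontier E) = 0) :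
    Tendsto (fun n => ((μs n) E).toReal) atTop (𝓝 ((μ E).toReal)) := by
  set μF : FiniteMeasure Circle' := ⟨μ, inferInstance⟩ with hμF
  set μsF : ℕ → FiniteMeasure Circle' := fun n => ⟨μs n, inferInstance⟩ with hμsF
  have hT : Tendsto μsF atTop (𝓝 μF) :=
    FiniteMeasure.tendsto_iff_forall_integral_tendsto.mpr hw
  have h_closeds : ∀ F, IsClosed F → (atTop.limsup fun n => μs n F) ≤ μ F := by
    intro F hF
    exact FiniteMeasure.limsup_measure_closed_le_of_tendsto hT hF
  have h_opens : ∀ G, IsOpen G → μ G ≤ atTop.liminf fun n => μs n G := by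
    intro G hG
    have key : (atTop.limsup fun n => μs n Gᶜ) ≤ μ Gᶜ := h_closeds _ hG.isClosed_compl
    have hμG : μ G = c - μ Gᶜ := by
      have := measure_compl hG.measurableSet.compl (measure_ne_top μ Gᶜ)
      rw [compl_compl] at this
      rw [this, hmassμ]
    have hμsG : ∀ n, μs n G = c - μs n Gᶜ := by
      intro n
      have := measure_compl hG.measurableSet.compl (measure_ne_top (μs n) Gᶜ)
      rw [compl_compl] at this
      rw [this, hmass n]
    have hmap := antitone_const_tsub.map_limsup_of_continuousAt (F := atTop)
      (fun n => μs n Gᶜ) (ENNReal.continuous_sub_left hc).continuousAt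
    calc μ G = c - μ Gᶜ := hμG
      _ ≤ c - atTop.limsup fun n => μs n Gᶜ := tsub_le_tsub_left key c
      _ = atTop.liminf fun n => c - μs n Gᶜ := by
          rw [hmap]
          congr 1
      _ = atTop.liminf fun n => μs n G := by
          congr 1
          funext n
          rw [hμsG n]
  have hEnn : Tendsto (fun n => μs n E) atTop (𝓝 (μ E)) := by
    refine tendsto_measure_of_le_liminf_measure_of_limsup_measure_le
      interior_subset subset_closure ?_ (h_opens _ isOpen_interior)
      (h_closeds _ isClosed_closure)
    exact hE
  exact (ENNReal.tendsto_toReal (measure_ne_top μ E)).comp hEnn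

lemma mass_limit {m : ℝ} (hm : 0 < m) (μs : ℕ → Measure Circle') (σ : Measure Circle')
    [∀ n, IsFiniteMeasure (μs n)] [IsFiniteMeasure σ]
    (hmass : ∀ n, μs n Set.univ = ENNReal.ofReal m)
    (hw : ∀ f : BoundedContinuousFunction Circle' ℝ,
      Tendsto (fun n => ∫ x, f x ∂(μs n)) atTop (𝓝 (∫ x, f x ∂σ))) :
    σ Set.univ = ENNReal.ofReal m := by
  have h1 := hw (BoundedContinuousFunction.const Circle' (1:ℝ))
  have hint : ∀ (ν : Measure Circle'), IsFiniteMeasure ν →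
      ∫ x, (BoundedContinuousFunction.const Circle' (1:ℝ)) x ∂ν = (ν Set.univ).toReal := by
    intro ν hν
    simp [Measure.real]
  rw [hint σ inferInstance] at h1
  have h2 : Tendsto (fun _ : ℕ => m) atTop (𝓝 ((σ Set.univ).toReal)) := by
    refine h1.congr fun n => ?_
    rw [hint (μs n) inferInstance, hmass n, ENNReal.toReal_ofReal hm.le]
  have := tendsto_nhds_unique h2 tendsto_const_nhds
  rw [← ENNReal.ofReal_toReal (measure_ne_top σ Set.univ), this]

/-! ### Flux basics -/

lemma excess_max_le (μ₁ μ₂ : Measure Circle') [IsFiniteMeasure μ₁] [IsFiniteMeasure μ₂]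
    (u v : Circle') : max (excess μ₁ μ₂ u v) 0 ≤ (μ₁ Set.univ).toReal := by
  apply max_le
  · have h1 : (μ₁ (arcCC u v)).toReal ≤ (μ₁ Set.univ).toReal :=
      ENNReal.toReal_mono (measure_ne_top _ _) (measure_mono (subset_univ _))
    have h2 : 0 ≤ (μ₂ (arcCC u v)).toReal := ENNReal.toReal_nonneg
    unfold excess
    linarith
  · exact ENNReal.toReal_nonneg

lemma flux_bdd (μ₁ μ₂ : Measure Circle') [IsFiniteMeasure μ₁] [IsFiniteMeasure μ₂] (v : Circle') :
    BddAbove (Set.range fun u => max (excess μ₁ μ₂ u v) 0) := by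
  refine ⟨(μ₁ Set.univ).toReal, ?_⟩
  rintro x ⟨u, rfl⟩
  exact excess_max_le μ₁ μ₂ u v

lemma le_flux (μ₁ μ₂ : Measure Circle') [IsFiniteMeasure μ₁] [IsFiniteMeasure μ₂]
    (u v : Circle') : max (excess μ₁ μ₂ u v) 0 ≤ flux μ₁ μ₂ v :=
  le_ciSup (flux_bdd μ₁ μ₂ v) u

lemma flux_nonneg (μ₁ μ₂ : Measure Circle') [IsFiniteMeasure μ₁] [IsFiniteMeasure μ₂]
    (v : Circle') : 0 ≤ flux μ₁ μ₂ v :=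
  le_trans (le_max_right _ 0) (le_flux μ₁ μ₂ v v)

lemma flux_le (μ₁ μ₂ : Measure Circle') [IsFiniteMeasure μ₁] [IsFiniteMeasure μ₂]
    {v : Circle'} {x : ℝ} (h : ∀ u, max (excess μ₁ μ₂ u v) 0 ≤ x) : flux μ₁ μ₂ v ≤ x :=
  ciSup_le h

/-! ### Convergence of the flux -/

lemma flux_tendsto (m₁ m₂ : ℝ) (hm₁ : 0 < m₁) (hm₂ : 0 < m₂) (hm : m₁ ≤ m₂)
    (ρ₁ ρ₂ : ℕ → Measure Circle')
    [∀ n, IsFiniteMeasure (ρ₁ n)] [∀ n, IsFiniteMeasure (ρ₂ n)]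
    (hmass₁ : ∀ n, ρ₁ n Set.univ = ENNReal.ofReal m₁)
    (hmass₂ : ∀ n, ρ₂ n Set.univ = ENNReal.ofReal m₂)
    (σ₁ σ₂ : Measure Circle') [IsFiniteMeasure σ₁] [IsFiniteMeasure σ₂]
    (hac₁ : σ₁ ≪ (volume : Measure Circle')) (hac₂ : σ₂ ≪ (volume : Measure Circle'))
    (hw₁ : ∀ f : BoundedContinuousFunction Circle' ℝ,
      Filter.Tendsto (fun n => ∫ x, f x ∂(ρ₁ n)) Filter.atTop (nhds (∫ x, f x ∂σ₁)))
    (hw₂ : ∀ f : BoundedContinuousFunction Circle' ℝ,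
      Filter.Tendsto (fun n => ∫ x, f x ∂(ρ₂ n)) Filter.atTop (nhds (∫ x, f x ∂σ₂)))
    (v : Circle') :
    Tendsto (fun n => flux (ρ₁ n) (ρ₂ n) v) atTop (𝓝 (flux σ₁ σ₂ v)) := by
  have hσ₁u : σ₁ Set.univ = ENNReal.ofReal m₁ := mass_limit hm₁ ρ₁ σ₁ hmass₁ hw₁
  have hσ₂u : σ₂ Set.univ = ENNReal.ofReal m₂ := mass_limit hm₂ ρ₂ σ₂ hmass₂ hw₂
  have hσ₁ut : (σ₁ Set.univ).toReal = m₁ := by rw [hσ₁u, ENNReal.toReal_ofReal hm₁.le]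
  have hσ₂ut : (σ₂ Set.univ).toReal = m₂ := by rw [hσ₂u, ENNReal.toReal_ofReal hm₂.le]
  have hnull : ∀ (σ : Measure Circle'), σ ≪ (volume : Measure Circle') →
      ∀ u w : Circle', σ (frontier (arcCC u w)) = 0 := by
    intro σ hac u w
    apply measure_mono_null (frontier_arcCC_subset u w)
    apply hac
    have : ({u, w} : Set Circle') = {u} ∪ {w} := rfl
    rw [this]
    exact measure_union_null (volume_singleton u) (volume_singleton w)
  have convCC₁ : ∀ (u w : Circle'),
      Tendsto (fun n => ((ρ₁ n) (arcCC u w)).toReal) atTop (𝓝 ((σ₁ (arcCC u w)).toReal)) :=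
    fun u w => portmanteau ENNReal.ofReal_ne_top σ₁ ρ₁ hmass₁ hσ₁u hw₁ (hnull σ₁ hac₁ u w)
  have convCC₂ : ∀ (u w : Circle'),
      Tendsto (fun n => ((ρ₂ n) (arcCC u w)).toReal) atTop (𝓝 ((σ₂ (arcCC u w)).toReal)) :=
    fun u w => portmanteau ENNReal.ofReal_ne_top σ₂ ρ₂ hmass₂ hσ₂u hw₂ (hnull σ₂ hac₂ u w)
  have convE : ∀ u : Circle',
      Tendsto (fun n => max (excess (ρ₁ n) (ρ₂ n) u v) 0) atTop
        (𝓝 (max (excess σ₁ σ₂ u v) 0)) :=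
    fun u => ((convCC₁ u v).sub (convCC₂ u v)).max tendsto_const_nhds
  rw [tendsto_order]
  constructor
  · -- lower bound
    intro x hx
    obtain ⟨u, hu⟩ := exists_lt_of_lt_ciSup
      (show x < ⨆ u : Circle', max (excess σ₁ σ₂ u v) 0 from hx)
    filter_upwards [(tendsto_order.1 (convE u)).1 x hu] with n hn
    exact lt_of_lt_of_le hn (le_flux _ _ u v)
  · -- upper bound
    intro x hx
    set Jv := flux σ₁ σ₂ v with hJv
    have hJv0 : 0 ≤ Jv := flux_nonneg σ₁ σ₂ v
    set ε := (x - Jv)/3 with hεdef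
    have hεpos : 0 < ε := by rw [hεdef]; linarith
    obtain ⟨δ₁, hδ₁pos, hδ₁⟩ := uniformAC σ₁ hac₁ hεpos
    obtain ⟨δ₂, hδ₂pos, hδ₂⟩ := uniformAC σ₂ hac₂ hεpos
    set δ := min δ₁ δ₂ with hδdef
    have hδpos : 0 < δ := lt_min hδ₁pos hδ₂pos
    obtain ⟨N, hNgt⟩ := exists_nat_gt (max 2 (1/δ))
    have hN2 : 2 ≤ N := by
      have h2 : (2:ℝ) < N := lt_of_le_of_lt (le_max_left _ _) hNgt
      exact_mod_cast h2.le
    have hNpos : (0:ℝ) < N := by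
      have : (0:ℕ) < N := by omega
      exact_mod_cast this
    have hNδ : 1/(N:ℝ) < δ := by
      rw [div_lt_iff₀ hNpos]
      have h3 : 1/δ < N := lt_of_le_of_lt (le_max_right _ _) hNgt
      rw [div_lt_iff₀ hδpos] at h3
      linarith [mul_comm δ (N:ℝ)]
    have hNδ₁ : 1/(N:ℝ) ≤ δ₁ := le_trans hNδ.le (min_le_left _ _)
    have hNδ₂ : 1/(N:ℝ) ≤ δ₂ := le_trans hNδ.le (min_le_right _ _)
    set A : ℕ → Set Circle' := fun j =>
      if j = 0 then Set.univ else arcCC (v + (((j:ℝ)/(N:ℝ) : ℝ) : Circle')) v with hA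
    set A' : ℕ → Set Circle' := fun j =>
      arcCC (v + ((((j:ℝ)+1)/(N:ℝ) : ℝ) : Circle')) v with hA'
    have hmeasA : ∀ j, MeasurableSet (A j) := by
      intro j
      by_cases hj : j = 0
      · simp [hA, hj]
      · simp only [hA, if_neg hj]
        exact measurableSet_arcCC _ _
    have hmeasA' : ∀ j, MeasurableSet (A' j) := fun j => measurableSet_arcCC _ _
    -- inclusion claim
    have claim : ∀ u : Circle', ∃ j, j < N ∧ arcCC u v ⊆ A j ∧ A' j ⊆ arcCC u v := by
      intro u
      set t := theta v u with ht
      have ht0 : 0 ≤ t := (theta_mem v u).1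
      have ht1 : t < 1 := (theta_mem v u).2
      have hu : u = v + ((t:ℝ) : Circle') := by rw [ht]; exact eq_add_theta v u
      rcases eq_or_lt_of_le ht0 with h0 | h0
      · -- t = 0, u = v
        have huv : u = v := theta_eq_zero_iff.mp (by rw [← ht]; exact h0.symm)
        have hN1ne : N - 1 ≠ 0 := by omega
        refine ⟨N - 1, by omega, ?_, ?_⟩
        · rw [huv, arcCC_self]
          intro w hw
          rw [mem_singleton_iff] at hw
          subst hw
          simp only [hA, if_neg hN1ne]
          exact mem_arcCC_right _ _
        · have hcast : (((N-1 : ℕ):ℝ) + 1)/(N:ℝ) = 1 := by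
            have h1N : 1 ≤ N := by omega
            have : ((N-1:ℕ):ℝ) = (N:ℝ) - 1 := by
              push_cast [h1N]
              ring
            rw [this]
            field_simp
            ring
          have hone : (((1:ℝ)) : Circle') = 0 := AddCircle.coe_period (p := (1:ℝ))
          simp only [hA', hcast, hone, add_zero, arcCC_self]
          rw [huv, arcCC_self]
      · -- 0 < t
        have htN0 : (0:ℝ) ≤ t * N := by positivity
        set j : ℕ := ⌊t * (N:ℝ)⌋.toNat with hj
        have hfloor_nonneg : 0 ≤ ⌊t * (N:ℝ)⌋ := Int.floor_nonneg.mpr htN0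
        have hjcast : ((j:ℕ):ℝ) = ((⌊t * (N:ℝ)⌋ : ℤ) : ℝ) := by
          rw [hj]
          exact_mod_cast congrArg (fun z : ℤ => (z : ℝ)) (Int.toNat_of_nonneg hfloor_nonneg)
        have hjle : (j:ℝ) ≤ t * N := by rw [hjcast]; exact Int.floor_le _
        have hjgt : t * N < (j:ℝ) + 1 := by rw [hjcast]; exact Int.lt_floor_add_one _
        have hjN : j < N := by
          have : (j:ℝ) < (N:ℝ) := lt_of_le_of_lt hjle (by nlinarith)
          exact_mod_cast this
        refine ⟨j, hjN, ?_, ?_⟩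
        · by_cases hj0 : j = 0
          · simp [hA, hj0]
          · have hjge1 : (1:ℝ) ≤ (j:ℝ) := by
              have : 1 ≤ j := Nat.one_le_iff_ne_zero.mpr hj0
              exact_mod_cast this
            have hs0 : 0 < (j:ℝ)/(N:ℝ) := by positivity
            have hst : (j:ℝ)/(N:ℝ) ≤ t := (div_le_iff₀ hNpos).mpr hjle
            simp only [hA, if_neg hj0]
            rw [hu]
            exact arcCC_shift_subset hs0 hst ht1
        · rcases eq_or_lt_of_le (Nat.succ_le_of_lt hjN) with hjN' | hjN'
          · -- j+1 = N
            have hcast : ((j:ℝ)+1)/(N:ℝ) = 1 := by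
              have : ((j:ℝ)+1) = (N:ℝ) := by exact_mod_cast congrArg (Nat.cast (R := ℝ)) hjN'
              rw [this]
              field_simp
            have hone : (((1:ℝ)) : Circle') = 0 := AddCircle.coe_period (p := (1:ℝ))
            simp only [hA', hcast, hone, add_zero, arcCC_self]
            intro w hw
            rw [mem_singleton_iff] at hw
            subst hw
            exact mem_arcCC_right _ _
          · have hjsuc : ((j:ℝ)+1) < (N:ℝ) := by exact_mod_cast hjN'
            have hs'1 : ((j:ℝ)+1)/(N:ℝ) < 1 := (div_lt_one hNpos).mpr hjsuc
            have hts' : t ≤ ((j:ℝ)+1)/(N:ℝ) := (le_div_iff₀ hNpos).mpr hjgt.le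
            simp only [hA']
            rw [hu]
            exact arcCC_shift_subset h0 hts' hs'1
    -- bound on the limits
    have hBlim : ∀ j, j < N →
        max ((σ₁ (A j)).toReal - (σ₂ (A' j)).toReal) 0 ≤ Jv + ε := by
      intro j hjN
      by_cases hj0 : j = 0
      · subst hj0
        have hA0 : A 0 = Set.univ := by simp [hA]
        have hs : ((0:ℝ)+1)/(N:ℝ) = 1/(N:ℝ) := by norm_num
        have hs0 : 0 < 1/(N:ℝ) := by positivity
        have hs1 : 1/(N:ℝ) < 1 := by
          rw [div_lt_one hNpos]
          have : (1:ℕ) < N := by omega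
          exact_mod_cast this
        have hcompl : Set.univ \ A' 0 ⊆ {w : Circle' | 0 ≤ theta v w ∧ theta v w ≤ 1/(N:ℝ)} := by
          simp only [hA', Nat.cast_zero, hs]
          rw [arcCC_shift hs0 hs1]
          rintro w ⟨-, hw2⟩
          simp only [mem_setOf_eq, not_or, not_le] at hw2
          exact ⟨(theta_mem v w).1, hw2.2.le⟩
        have hvol : volume (Set.univ \ A' 0) ≤ ENNReal.ofReal δ₂ := by
          refine le_trans (measure_mono hcompl) (le_trans (volume_band v (by positivity)) ?_)
          exact ENNReal.ofReal_le_ofReal (by linarith)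
        have hσ₂c : (σ₂ (Set.univ \ A' 0)).toReal ≤ ε :=
          hδ₂ _ (MeasurableSet.univ.diff (hmeasA' 0)) hvol
        have hsplit : (σ₂ Set.univ).toReal ≤ (σ₂ (A' 0)).toReal + (σ₂ (Set.univ \ A' 0)).toReal := by
          have h1 : σ₂ Set.univ ≤ σ₂ (A' 0) + σ₂ (Set.univ \ A' 0) := by
            conv_lhs => rw [← Set.union_diff_cancel (subset_univ (A' 0))]
            exact measure_union_le _ _
          have h2 := ENNReal.toReal_mono
            (by exact ENNReal.add_ne_top.mpr ⟨measure_ne_top _ _, measure_ne_top _ _⟩) h1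
          rwa [ENNReal.toReal_add (measure_ne_top _ _) (measure_ne_top _ _)] at h2
        rw [hA0, hσ₁ut]
        rw [hσ₂ut] at hsplit
        apply max_le
        · linarith
        · linarith
      · rcases eq_or_lt_of_le (Nat.succ_le_of_lt hjN) with hjN' | hjN'
        · -- j + 1 = N
          have hjge1 : (1:ℝ) ≤ (j:ℝ) := by
            have : 1 ≤ j := Nat.one_le_iff_ne_zero.mpr hj0
            exact_mod_cast this
          have hcast : ((j:ℝ)+1) = (N:ℝ) := by exact_mod_cast congrArg (Nat.cast (R := ℝ)) hjN'
          have hs0 : 0 < (j:ℝ)/(N:ℝ) := by positivity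
          have hs1 : (j:ℝ)/(N:ℝ) < 1 := by
            rw [div_lt_one hNpos]; linarith
          have hAj : A j = arcCC (v + (((j:ℝ)/(N:ℝ) : ℝ) : Circle')) v := by
            simp [hA, hj0]
          have hsub : A j \ {v} ⊆ {w : Circle' | (j:ℝ)/(N:ℝ) ≤ theta v w ∧ theta v w ≤ 1} := by
            rw [hAj, arcCC_shift hs0 hs1]
            rintro w ⟨hw1, hw2⟩
            rw [mem_singleton_iff] at hw2
            rcases hw1 with h | h
            · exact absurd (theta_eq_zero_iff.mp h) hw2
            · exact ⟨h, (theta_mem v w).2.le⟩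
          have hvol : volume (A j \ {v}) ≤ ENNReal.ofReal δ₁ := by
            refine le_trans (measure_mono hsub) (le_trans (volume_band v (by linarith)) ?_)
            apply ENNReal.ofReal_le_ofReal
            have : 1 - (j:ℝ)/(N:ℝ) = 1/(N:ℝ) := by
              field_simp
              linarith
            linarith [this]
          have hσdiff : (σ₁ (A j \ {v})).toReal ≤ ε :=
            hδ₁ _ ((hmeasA j).diff (measurableSet_singleton v)) hvol
          have hsing : σ₁ ({v} : Set Circle') = 0 := hac₁ (volume_singleton v)
          have hsplit : (σ₁ (A j)).toReal ≤ (σ₁ (A j \ {v})).toReal := by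
            have h1 : σ₁ (A j) ≤ σ₁ ({v} : Set Circle') + σ₁ (A j \ {v}) := by
              refine le_trans (measure_mono ?_) (measure_union_le _ _)
              intro w hw
              by_cases hwv : w = v
              · left; exact hwv
              · right; exact ⟨hw, hwv⟩
            rw [hsing, zero_add] at h1
            exact ENNReal.toReal_mono (measure_ne_top _ _) h1
          apply max_le
          · have : 0 ≤ (σ₂ (A' j)).toReal := ENNReal.toReal_nonneg
            linarith
          · linarith
        · -- 1 ≤ j, j+1 < N
          have hjge1 : (1:ℝ) ≤ (j:ℝ) := by
            have : 1 ≤ j := Nat.one_le_iff_ne_zero.mpr hj0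
            exact_mod_cast this
          have hjsuc : ((j:ℝ)+1) < (N:ℝ) := by exact_mod_cast hjN'
          have hs0 : 0 < (j:ℝ)/(N:ℝ) := by positivity
          have hs'1 : ((j:ℝ)+1)/(N:ℝ) < 1 := (div_lt_one hNpos).mpr hjsuc
          have hss' : (j:ℝ)/(N:ℝ) ≤ ((j:ℝ)+1)/(N:ℝ) := by
            gcongr
            linarith
          have hAj : A j = arcCC (v + (((j:ℝ)/(N:ℝ) : ℝ) : Circle')) v := by simp [hA, hj0]
          have hA'j : A' j = arcCC (v + ((((j:ℝ)+1)/(N:ℝ) : ℝ) : Circle')) v := by simp [hA']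
          have hdiff : A j \ A' j ⊆
              {w : Circle' | (j:ℝ)/(N:ℝ) ≤ theta v w ∧ theta v w ≤ ((j:ℝ)+1)/(N:ℝ)} := by
            rw [hAj, hA'j]
            exact arcCC_shift_diff_subset hs0 hss' hs'1
          have hvol : volume (A j \ A' j) ≤ ENNReal.ofReal δ₁ := by
            refine le_trans (measure_mono hdiff) (le_trans (volume_band v hss') ?_)
            apply ENNReal.ofReal_le_ofReal
            have heq : ((j:ℝ)+1)/(N:ℝ) - (j:ℝ)/(N:ℝ) = 1/(N:ℝ) := by ring
            rw [heq]; exact hNδ₁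
          have hσdiff : (σ₁ (A j \ A' j)).toReal ≤ ε :=
            hδ₁ _ ((hmeasA j).diff (hmeasA' j)) hvol
          have hsplit : (σ₁ (A j)).toReal ≤ (σ₁ (A' j)).toReal + (σ₁ (A j \ A' j)).toReal := by
            have h1 : σ₁ (A j) ≤ σ₁ (A' j) + σ₁ (A j \ A' j) := by
              refine le_trans (measure_mono ?_) (measure_union_le _ _)
              intro w hw
              by_cases hwA : w ∈ A' j
              · left; exact hwA
              · right; exact ⟨hw, hwA⟩
            have h2 := ENNReal.toReal_mono
              (ENNReal.add_ne_top.mpr ⟨measure_ne_top _ _, measure_ne_top _ _⟩) h1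
            rwa [ENNReal.toReal_add (measure_ne_top _ _) (measure_ne_top _ _)] at h2
          have hexc : (σ₁ (A' j)).toReal - (σ₂ (A' j)).toReal =
              excess σ₁ σ₂ (v + ((((j:ℝ)+1)/(N:ℝ) : ℝ) : Circle')) v := by
            rw [hA'j]
            rfl
          have hmax := le_flux σ₁ σ₂ (v + ((((j:ℝ)+1)/(N:ℝ) : ℝ) : Circle')) v
          rw [← hJv] at hmax
          have hml := le_max_left (excess σ₁ σ₂ (v + ((((j:ℝ)+1)/(N:ℝ) : ℝ) : Circle')) v) 0
          apply max_le
          · linarith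
          · linarith
    -- convergence of the bounds
    have hBconv : ∀ j, j < N →
        Tendsto (fun n => max (((ρ₁ n) (A j)).toReal - ((ρ₂ n) (A' j)).toReal) 0) atTop
          (𝓝 (max ((σ₁ (A j)).toReal - (σ₂ (A' j)).toReal) 0)) := by
      intro j _
      have c1 : Tendsto (fun n => ((ρ₁ n) (A j)).toReal) atTop (𝓝 ((σ₁ (A j)).toReal)) := by
        by_cases hj0 : j = 0
        · have hA0 : A j = Set.univ := by simp [hA, hj0]
          rw [hA0]
          have hconst : (fun n => ((ρ₁ n) Set.univ).toReal) = fun _ => m₁ := by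
            funext n; rw [hmass₁ n, ENNReal.toReal_ofReal hm₁.le]
          rw [hconst, hσ₁ut]
          exact tendsto_const_nhds
        · have hAj : A j = arcCC (v + (((j:ℝ)/(N:ℝ) : ℝ) : Circle')) v := by simp [hA, hj0]
          rw [hAj]
          exact convCC₁ _ _
      have c2 : Tendsto (fun n => ((ρ₂ n) (A' j)).toReal) atTop (𝓝 ((σ₂ (A' j)).toReal)) := by
        have hA'j : A' j = arcCC (v + ((((j:ℝ)+1)/(N:ℝ) : ℝ) : Circle')) v := by simp [hA']
        rw [hA'j]
        exact convCC₂ _ _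
      exact (c1.sub c2).max tendsto_const_nhds
    have hev : ∀ᶠ n in atTop, ∀ j ∈ Finset.range N,
        max (((ρ₁ n) (A j)).toReal - ((ρ₂ n) (A' j)).toReal) 0 < Jv + 2*ε := by
      rw [Filter.eventually_all_finset]
      intro j hj
      rw [Finset.mem_range] at hj
      exact (tendsto_order.1 (hBconv j hj)).2 _ (lt_of_le_of_lt (hBlim j hj) (by linarith))
    filter_upwards [hev] with n hn
    have hflux : flux (ρ₁ n) (ρ₂ n) v ≤ Jv + 2*ε := by
      apply flux_le
      intro u
      obtain ⟨j, hjN', hsub1, hsub2⟩ := claim u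
      have h1 : excess (ρ₁ n) (ρ₂ n) u v ≤ ((ρ₁ n) (A j)).toReal - ((ρ₂ n) (A' j)).toReal := by
        have e1 := ENNReal.toReal_mono (measure_ne_top (ρ₁ n) (A j)) (measure_mono hsub1)
        have e2 := ENNReal.toReal_mono (measure_ne_top (ρ₂ n) (arcCC u v)) (measure_mono hsub2)
        unfold excess
        linarith
      calc max (excess (ρ₁ n) (ρ₂ n) u v) 0
          ≤ max (((ρ₁ n) (A j)).toReal - ((ρ₂ n) (A' j)).toReal) 0 := max_le_max h1 le_rfl
        _ ≤ Jv + 2*ε := (hn j (Finset.mem_range.mpr hjN')).le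
    have hfin : Jv + 2*ε < x := by rw [hεdef]; linarith
    linarith

end StmtAux

/-- convergence of the collapsed measures on half-open arcs, under weak
convergence of the measures towards absolutely continuous limits. -/
theorem stmt10 (m₁ m₂ : ℝ) (hm₁ : 0 < m₁) (hm₂ : 0 < m₂) (hm : m₁ ≤ m₂)
    (ρ₁ ρ₂ : ℕ → Measure Circle')
    [∀ n, IsFiniteMeasure (ρ₁ n)] [∀ n, IsFiniteMeasure (ρ₂ n)]
    (hmass₁ : ∀ n, ρ₁ n Set.univ = ENNReal.ofReal m₁)
    (hmass₂ : ∀ n, ρ₂ n Set.univ = ENNReal.ofReal m₂)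
    (σ₁ σ₂ : Measure Circle') [IsFiniteMeasure σ₁] [IsFiniteMeasure σ₂]
    (hac₁ : σ₁ ≪ (volume : Measure Circle')) (hac₂ : σ₂ ≪ (volume : Measure Circle'))
    (hw₁ : ∀ f : BoundedContinuousFunction Circle' ℝ,
      Filter.Tendsto (fun n => ∫ x, f x ∂(ρ₁ n)) Filter.atTop (nhds (∫ x, f x ∂σ₁)))
    (hw₂ : ∀ f : BoundedContinuousFunction Circle' ℝ,
      Filter.Tendsto (fun n => ∫ x, f x ∂(ρ₂ n)) Filter.atTop (nhds (∫ x, f x ∂σ₂))) :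
    ∀ a b : Circle',
      Filter.Tendsto
        (fun n => (ρ₁ n (arcOC a b)).toReal + flux (ρ₁ n) (ρ₂ n) a - flux (ρ₁ n) (ρ₂ n) b)
        Filter.atTop
        (nhds ((σ₁ (arcOC a b)).toReal + flux σ₁ σ₂ a - flux σ₁ σ₂ b)) := by
  intro a b
  have hσ₁u : σ₁ Set.univ = ENNReal.ofReal m₁ := StmtAux.mass_limit hm₁ ρ₁ σ₁ hmass₁ hw₁
  have hOC : Filter.Tendsto (fun n => ((ρ₁ n) (arcOC a b)).toReal) Filter.atTop
      (nhds ((σ₁ (arcOC a b)).toReal)) := by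
    apply StmtAux.portmanteau ENNReal.ofReal_ne_top σ₁ ρ₁ hmass₁ hσ₁u hw₁
    apply measure_mono_null (StmtAux.frontier_arcOC_subset a b)
    apply hac₁
    have h : ({a, b} : Set Circle') = {a} ∪ {b} := rfl
    rw [h]
    exact measure_union_null (StmtAux.volume_singleton a) (StmtAux.volume_singleton b)
  have hfa := StmtAux.flux_tendsto m₁ m₂ hm₁ hm₂ hm ρ₁ ρ₂ hmass₁ hmass₂ σ₁ σ₂ hac₁ hac₂ hw₁ hw₂ a
  have hfb := StmtAux.flux_tendsto m₁ m₂ hm₁ hm₂ hm ρ₁ ρ₂ hmass₁ hmass₂ σ₁ σ₂ hac₁ hac₂ hw₁ hw₂ b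
  exact (hOC.add hfa).sub hfb

end
end

section
/- Let 0 < m₁ < m₂ < 1 and let f₁, f₂ : Λ → [0,1] be measurable with ∫_Λ f₁ dLeb = m₁, ∫_Λ f₂ dLeb = m₂, and f₁ ≤ f₂ a.e. Suppose the set 𝒰 := {u : f₁(u) = f₂(u)} is, up to a Lebesgue-null set, the disjoint union of at most countably many closed arcs 𝒰_i = [l_i, r_i]. For each i, let f̂_i : 𝒰_i → [0,1] be the density of the least concave majorant of u ↦ ∫_{[l_i,u]} f₂ dLeb on 𝒰_i (i.e. ∫_{[l_i,u]} f̂_i dLeb equals the least concave majorant at u, for all u ∈ 𝒰_i). Then the following identity holds: [∫_{𝒰ᶜ} h_{m₁}(f₁) dLeb + Σ_i ∫_{𝒰_i} h_{m₁}(f̂_i) dLeb + ∫_Λ h_{m₂}(f₂) dLeb] − ∫_Λ h_{m₁}(f₁) dLeb = ∫_{𝒰ᶜ} h_{m₂}(f₂) dLeb + Σ_i ∫_{𝒰_i} h_{m₂}(f̂_i) dLeb; in particular the left-hand side is nonnegative, i.e. S₂(f₁,f₂) ≥ ∫_Λ h_{m₁}(f₁) dLeb, where S₂(f₁,f₂)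 denotes the bracketed expression. -/
open MeasureTheory Set
open scoped ENNReal NNReal

noncomputable section

/-- The set `𝒥(ψ,g) = {v | ∃ u, ∫_{[u,v]} (ψ − g) > 0}` associated to a pair of
densities. -/
def JsetD (ψ g : Circle' → ℝ) : Set Circle' :=
  {v | ∃ u : Circle', 0 < ∫ w in arcCC u v, (ψ w - g w) ∂(volume : Measure Circle')}

open Classical in
/-- The collapsed density `C_g[ψ]`: equal to `g` on `𝒥(ψ,g)` and to `ψ` elsewhere. -/
noncomputable def collapseD (ψ g : Circle' → ℝ) : Circle' → ℝ :=
  fun u => if u ∈ JsetD ψ g then g u else ψ u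

/-- `h_m(x) = x log(x/m) + (1-x) log((1-x)/(1-m))`, with the convention `0 log 0 = 0`. -/
noncomputable def hFun (m x : ℝ) : ℝ :=
  x * Real.log (x / m) + (1 - x) * Real.log ((1 - x) / (1 - m))

/-- `k_m(x) = x log(x/m)`, with the convention `0 log 0 = 0`. -/
noncomputable def kFun (m x : ℝ) : ℝ := x * Real.log (x / m)

/-- The least concave majorant of `F` on `[0,L]`: the pointwise infimum of all concave
functions on `[0,L]` dominating `F` there. -/
noncomputable def lcMaj (L : ℝ) (F : ℝ → ℝ) (u : ℝ) : ℝ :=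
  sInf {y : ℝ | ∃ G : ℝ → ℝ,
    ConcaveOn ℝ (Set.Icc 0 L) G ∧ (∀ x ∈ Set.Icc 0 L, F x ≤ G x) ∧ y = G u}

/-! ### Auxiliary lemmas -/

lemma aux_mul_log_div_sub (x a b : ℝ) (ha : a ≠ 0) (hb : b ≠ 0) :
    x * Real.log (x / a) - x * Real.log (x / b) = x * Real.log (b / a) := by
  rcases eq_or_ne x 0 with rfl | hx
  · simp
  · rw [Real.log_div hx ha, Real.log_div hx hb, Real.log_div hb ha]; ring

lemma aux_hFun_sub (m₁ m₂ x : ℝ) (h1 : m₁ ≠ 0) (h1' : m₁ ≠ 1) (h2 : m₂ ≠ 0) (h2' : m₂ ≠ 1) :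
    hFun m₁ x - hFun m₂ x
      = x * Real.log (m₂ / m₁) + (1 - x) * Real.log ((1 - m₂) / (1 - m₁)) := by
  have e1 := aux_mul_log_div_sub x m₁ m₂ h1 h2
  have e2 := aux_mul_log_div_sub (1 - x) (1 - m₁) (1 - m₂)
    (sub_ne_zero.2 (Ne.symm h1')) (sub_ne_zero.2 (Ne.symm h2'))
  unfold hFun; linarith

lemma aux_hFun_nonneg (m x : ℝ) (hm0 : 0 < m) (hm1 : m < 1) (hx : x ∈ Set.Icc (0:ℝ) 1) :
    0 ≤ hFun m x := by
  obtain ⟨hx0, hx1⟩ := hx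
  rcases eq_or_lt_of_le hx0 with rfl | hx0'
  · have : hFun m 0 = Real.log ((1:ℝ) / (1 - m)) := by simp [hFun]
    rw [this, one_div, Real.log_inv]
    have := Real.log_nonpos (by linarith) (by linarith : 1 - m ≤ 1)
    linarith
  rcases eq_or_lt_of_le hx1 with rfl | hx1'
  · have : hFun m 1 = Real.log (1 / m) := by simp [hFun]
    rw [this, one_div, Real.log_inv]
    have := Real.log_nonpos hm0.le hm1.le
    linarith
  · have l1 := Real.log_le_sub_one_of_pos (show 0 < m / x by positivity)
    have l2 := Real.log_le_sub_one_of_pos (show 0 < (1 - m) / (1 - x) by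
      apply div_pos <;> linarith)
    have e1 : Real.log (x / m) = - Real.log (m / x) := by
      rw [← Real.log_inv]; congr 1; field_simp
    have e2 : Real.log ((1 - x) / (1 - m)) = - Real.log ((1 - m) / (1 - x)) := by
      rw [← Real.log_inv]; congr 1; field_simp
    have d1 : x * (m / x) = m := by field_simp
    have h1xne : (1 - x) ≠ 0 := by intro h; apply absurd hx1'; linarith [sub_eq_zero.mp h]
    have d2 : (1 - x) * ((1 - m) / (1 - x)) = 1 - m := by
      rw [mul_comm, div_mul_cancel₀ _ h1xne]
    unfold hFun
    rw [e1, e2]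
    nlinarith [mul_le_mul_of_nonneg_left l1 hx0'.le,
      mul_le_mul_of_nonneg_left l2 (by linarith : (0:ℝ) ≤ 1 - x)]

lemma aux_hFun_eq (m : ℝ) (hm : m ≠ 0) (hm1 : m ≠ 1) : hFun m = fun x =>
    (x * Real.log x - x * Real.log m)
      + ((1 - x) * Real.log (1 - x) - (1 - x) * Real.log (1 - m)) := by
  funext x
  have key : ∀ y c : ℝ, c ≠ 0 → y * Real.log (y / c) = y * Real.log y - y * Real.log c := by
    intro y c hc
    rcases eq_or_ne y 0 with rfl | hy
    · simp
    · rw [Real.log_div hy hc]; ring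
  unfold hFun
  rw [key x m hm, key (1 - x) (1 - m) (sub_ne_zero.2 (Ne.symm hm1))]

lemma aux_hFun_continuous (m : ℝ) (hm : m ≠ 0) (hm1 : m ≠ 1) : Continuous (hFun m) := by
  rw [aux_hFun_eq m hm hm1]
  have h1 : Continuous fun x : ℝ => x * Real.log x := Real.continuous_mul_log
  fun_prop

lemma aux_lcMaj_endpoint (L : ℝ) (hL : 0 ≤ L) (F : ℝ → ℝ) (M : ℝ)
    (hM : ∀ x ∈ Set.Icc 0 L, F x ≤ M) : lcMaj L F L = F L := by
  set M' := max M (F L) with hM'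
  set G : ℝ → ℝ := fun x => if x = L then F L else M' with hG
  have hGle : ∀ z : ℝ, G z ≤ M' := by
    intro z; by_cases h : z = L
    · simp only [hG, if_pos h]; exact le_max_right M (F L)
    · simp only [hG, if_neg h]; exact le_refl _
  have hGconc : ConcaveOn ℝ (Set.Icc 0 L) G := by
    constructor
    · exact convex_Icc 0 L
    · intro x hx y hy p q hp hq hpq
      simp only [smul_eq_mul]
      rcases eq_or_lt_of_le (show p * x + q * y ≤ L by nlinarith [hx.2, hy.2]) with he | hlt
      · have hplq : p * (L - x) + q * (L - y) = 0 := by nlinarith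
        have h1 : p * (L - x) = 0 := by
          nlinarith [mul_nonneg hp (by linarith [hx.2] : (0:ℝ) ≤ L - x),
            mul_nonneg hq (by linarith [hy.2] : (0:ℝ) ≤ L - y)]
        have h2 : q * (L - y) = 0 := by linarith
        have hGL : G (p * x + q * y) = F L := by rw [he]; simp [hG]
        rw [hGL]
        rcases mul_eq_zero.mp h1 with hp0 | hxL
        · have hq1 : q = 1 := by linarith
          have hyL : y = L := by
            rcases mul_eq_zero.mp h2 with h | h
            · exact absurd h (by rw [hq1]; norm_num)
            · linarith
          simp [hp0, hq1, hG, hyL]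
        · have hxL' : x = L := by linarith
          rcases mul_eq_zero.mp h2 with hq0 | hyL
          · have hp1 : p = 1 := by linarith
            simp [hq0, hp1, hG, hxL']
          · have hyL' : y = L := by linarith
            simp only [hG, hxL', hyL', if_pos rfl]
            have : p * F L + q * F L = (p + q) * F L := by ring
            rw [this, hpq, one_mul]
      · have hne : G (p * x + q * y) = M' := by
          rw [hG]; simp only []; rw [if_neg (ne_of_lt hlt)]
        rw [hne]
        calc p * G x + q * G y ≤ p * M' + q * M' := by
              have := hGle x; have := hGle y; nlinarith
          _ = (p + q) * M' := by ring
          _ = M' := by rw [hpq, one_mul]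
  have hLmem : L ∈ Set.Icc 0 L := ⟨hL, le_refl L⟩
  have hmem : F L ∈ {y : ℝ | ∃ G : ℝ → ℝ,
      ConcaveOn ℝ (Set.Icc 0 L) G ∧ (∀ x ∈ Set.Icc 0 L, F x ≤ G x) ∧ y = G L} := by
    refine ⟨G, hGconc, ?_, by simp [hG]⟩
    intro x hx
    by_cases h : x = L
    · simp [hG, h]
    · simp only [hG, if_neg h]; exact le_trans (hM x hx) (le_max_left _ _)
  have hlb : ∀ y ∈ {y : ℝ | ∃ G : ℝ → ℝ,
      ConcaveOn ℝ (Set.Icc 0 L) G ∧ (∀ x ∈ Set.Icc 0 L, F x ≤ G x) ∧ y = G L}, F L ≤ y := by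
    rintro y ⟨G', _, hdom, rfl⟩
    exact hdom L hLmem
  exact le_antisymm (csInf_le ⟨F L, hlb⟩ hmem) (le_csInf ⟨F L, hmem⟩ hlb)

lemma aux_measurable_theta (u : Circle') : Measurable (theta u) :=
  (measurable_subtype_coe.comp (AddCircle.measurableEquivIco (T := 1) 0).measurable).comp
    (measurable_id.sub_const u)

lemma aux_measurableSet_arcCC (u v : Circle') : MeasurableSet (arcCC u v) :=
  (aux_measurable_theta u) measurableSet_Iic

lemma aux_integrable_of_bdd {f : Circle' → ℝ} (hf : Measurable f) (C : ℝ)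
    (h : ∀ u, ‖f u‖ ≤ C) : Integrable f (volume : Measure Circle') :=
  ⟨hf.aestronglyMeasurable, HasFiniteIntegral.of_bounded (Filter.Eventually.of_forall h)⟩

lemma aux_hFun_bound (m : ℝ) (hm : m ≠ 0) (hm1 : m ≠ 1) :
    ∃ C : ℝ, ∀ x ∈ Set.Icc (0:ℝ) 1, ‖hFun m x‖ ≤ C :=
  isCompact_Icc.exists_bound_of_continuousOn (aux_hFun_continuous m hm hm1).continuousOn

lemma aux_integrable_hFun (m : ℝ) (hm : m ≠ 0) (hm1 : m ≠ 1) {f : Circle' → ℝ}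
    (hf : Measurable f) (hfr : ∀ u, f u ∈ Set.Icc (0:ℝ) 1) :
    Integrable (fun u => hFun m (f u)) (volume : Measure Circle') := by
  obtain ⟨C, hC⟩ := aux_hFun_bound m hm hm1
  exact aux_integrable_of_bdd ((aux_hFun_continuous m hm hm1).measurable.comp hf) C
    (fun u => hC _ (hfr u))

lemma aux_set_hFun_diff (m₁ m₂ : ℝ) (h1 : m₁ ≠ 0) (h1' : m₁ ≠ 1) (h2 : m₂ ≠ 0) (h2' : m₂ ≠ 1)
    (s : Set Circle') (hs : MeasurableSet s) (g : Circle' → ℝ) (hg : Measurable g)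
    (hgr : ∀ u, g u ∈ Set.Icc (0:ℝ) 1) :
    (∫ u in s, hFun m₁ (g u) ∂(volume : Measure Circle'))
      - (∫ u in s, hFun m₂ (g u) ∂(volume : Measure Circle'))
    = Real.log (m₂ / m₁) * (∫ u in s, g u ∂(volume : Measure Circle'))
      + Real.log ((1 - m₂) / (1 - m₁))
        * (((volume : Measure Circle') s).toReal
            - ∫ u in s, g u ∂(volume : Measure Circle')) := by
  have hgint : Integrable g (volume : Measure Circle') :=
    aux_integrable_of_bdd hg 1 (fun u => by
      rw [Real.norm_eq_abs, abs_le]; constructor <;> linarith [(hgr u).1, (hgr u).2])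
  have hint1 := (aux_integrable_hFun m₁ h1 h1' hg hgr).integrableOn (s := s)
  have hint2 := (aux_integrable_hFun m₂ h2 h2' hg hgr).integrableOn (s := s)
  rw [← integral_sub hint1 hint2]
  have : ∀ u, hFun m₁ (g u) - hFun m₂ (g u)
      = g u * Real.log (m₂ / m₁) + (1 - g u) * Real.log ((1 - m₂) / (1 - m₁)) :=
    fun u => aux_hFun_sub m₁ m₂ (g u) h1 h1' h2 h2'
  simp_rw [this]
  have hone : Integrable (fun a : Circle' => 1 - g a) (volume : Measure Circle') :=
    aux_integrable_of_bdd (measurable_const.sub hg) 1 (fun u => by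
      rw [Real.norm_eq_abs, abs_le]; constructor <;> linarith [(hgr u).1, (hgr u).2])
  rw [integral_add ((hgint.integrableOn).mul_const _) ((hone.integrableOn).mul_const _),
    integral_mul_const, integral_mul_const,
    integral_sub ((integrable_const (1:ℝ)).integrableOn) (hgint.integrableOn)]
  simp [mul_comm, Measure.real]

/-- the identity
`S₂(f₁,f₂) − ∫ h_{m₁}(f₁) = ∫_{𝒰ᶜ} h_{m₂}(f₂) + Σᵢ ∫_{𝒰ᵢ} h_{m₂}(f̂ᵢ)`, where
`S₂(f₁,f₂) = ∫_{𝒰ᶜ} h_{m₁}(f₁) + Σᵢ ∫_{𝒰ᵢ} h_{m₁}(f̂ᵢ) + ∫ h_{m₂}(f₂)`;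
in particular `S₂(f₁,f₂) ≥ ∫ h_{m₁}(f₁)`. -/
theorem stmt18 (m₁ m₂ : ℝ) (hm₁pos : 0 < m₁) (hm₁₂ : m₁ < m₂) (hm₂lt : m₂ < 1)
    (f₁ f₂ : Circle' → ℝ) (hf₁meas : Measurable f₁) (hf₂meas : Measurable f₂)
    (hf₁range : ∀ u, f₁ u ∈ Set.Icc (0:ℝ) 1) (hf₂range : ∀ u, f₂ u ∈ Set.Icc (0:ℝ) 1)
    (hm₁ : (∫ u, f₁ u ∂(volume : Measure Circle')) = m₁)
    (hm₂ : (∫ u, f₂ u ∂(volume : Measure Circle')) = m₂)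
    (hle : ∀ᵐ u ∂(volume : Measure Circle'), f₁ u ≤ f₂ u)
    (ι : Type) [Countable ι] (l r : ι → Circle')
    (hdisj : Pairwise (Function.onFun Disjoint (fun i => arcCC (l i) (r i))))
    (hU : {u | f₁ u = f₂ u} =ᵐ[(volume : Measure Circle')] ⋃ i, arcCC (l i) (r i))
    (fhat : ι → Circle' → ℝ)
    (hfhatmeas : ∀ i, Measurable (fhat i))
    (hfhatrange : ∀ i u, fhat i u ∈ Set.Icc (0:ℝ) 1)
    (hfhat : ∀ i, ∀ t ∈ Set.Icc (0:ℝ) (theta (l i) (r i)),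
      (∫ w in arcCC (l i) ((l i) + (t : Circle')), fhat i w ∂(volume : Measure Circle'))
        = lcMaj (theta (l i) (r i))
            (fun s => ∫ w in arcCC (l i) ((l i) + (s : Circle')), f₂ w
              ∂(volume : Measure Circle')) t) :
    (((∫ u in (⋃ i, arcCC (l i) (r i))ᶜ, hFun m₁ (f₁ u) ∂(volume : Measure Circle'))
        + (∑' i, ∫ u in arcCC (l i) (r i), hFun m₁ (fhat i u) ∂(volume : Measure Circle'))
        + ∫ u, hFun m₂ (f₂ u) ∂(volume : Measure Circle'))
      - ∫ u, hFun m₁ (f₁ u) ∂(volume : Measure Circle'))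
      = (∫ u in (⋃ i, arcCC (l i) (r i))ᶜ, hFun m₂ (f₂ u) ∂(volume : Measure Circle'))
        + ∑' i, ∫ u in arcCC (l i) (r i), hFun m₂ (fhat i u) ∂(volume : Measure Circle')
    ∧ (∫ u, hFun m₁ (f₁ u) ∂(volume : Measure Circle'))
        ≤ (∫ u in (⋃ i, arcCC (l i) (r i))ᶜ, hFun m₁ (f₁ u) ∂(volume : Measure Circle'))
          + (∑' i, ∫ u in arcCC (l i) (r i), hFun m₁ (fhat i u) ∂(volume : Measure Circle'))
          + ∫ u, hFun m₂ (f₂ u) ∂(volume : Measure Circle') := by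
  have hm₂pos : 0 < m₂ := lt_trans hm₁pos hm₁₂
  have hm₁lt : m₁ < 1 := lt_trans hm₁₂ hm₂lt
  have h1 : m₁ ≠ 0 := ne_of_gt hm₁pos
  have h1' : m₁ ≠ 1 := ne_of_lt hm₁lt
  have h2 : m₂ ≠ 0 := ne_of_gt hm₂pos
  have h2' : m₂ ≠ 1 := ne_of_lt hm₂lt
  have hmUi : ∀ i, MeasurableSet (arcCC (l i) (r i)) := fun i => aux_measurableSet_arcCC _ _
  have hmU : MeasurableSet (⋃ i, arcCC (l i) (r i)) := MeasurableSet.iUnion hmUi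
  have hint11 : Integrable (fun u => hFun m₁ (f₁ u)) (volume : Measure Circle') :=
    aux_integrable_hFun m₁ h1 h1' hf₁meas hf₁range
  have hint22 : Integrable (fun u => hFun m₂ (f₂ u)) (volume : Measure Circle') :=
    aux_integrable_hFun m₂ h2 h2' hf₂meas hf₂range
  have hintf2 : Integrable f₂ (volume : Measure Circle') :=
    aux_integrable_of_bdd hf₂meas 1 (fun u => by
      rw [Real.norm_eq_abs, abs_le]; constructor <;> linarith [(hf₂range u).1, (hf₂range u).2])
  -- endpoint identity: ∫_{U_i} fhat i = ∫_{U_i} f₂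
  have hS : ∀ i, (∫ u in arcCC (l i) (r i), fhat i u ∂(volume : Measure Circle'))
      = ∫ u in arcCC (l i) (r i), f₂ u ∂(volume : Measure Circle') := by
    intro i
    have hL0 : 0 ≤ theta (l i) (r i) := ((AddCircle.equivIco 1 0) (r i - l i)).2.1
    have hcoe : ((theta (l i) (r i) : ℝ) : Circle') = r i - l i :=
      (AddCircle.equivIco 1 0).symm_apply_apply _
    have hend : l i + ((theta (l i) (r i) : ℝ) : Circle') = r i := by rw [hcoe]; abel
    have hMb : ∀ s ∈ Set.Icc (0:ℝ) (theta (l i) (r i)),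
        (∫ w in arcCC (l i) (l i + (s : Circle')), f₂ w ∂(volume : Measure Circle'))
          ≤ ((volume : Measure Circle') (univ : Set Circle')).toReal := by
      intro s _
      calc (∫ w in arcCC (l i) (l i + (s : Circle')), f₂ w ∂(volume : Measure Circle'))
          ≤ ∫ _ in arcCC (l i) (l i + (s : Circle')), (1:ℝ) ∂(volume : Measure Circle') := by
            apply setIntegral_mono_on (hintf2.integrableOn)
              ((integrable_const (1:ℝ)).integrableOn) (aux_measurableSet_arcCC _ _)
            intro x _; exact (hf₂range x).2
        _ = ((volume : Measure Circle') (arcCC (l i) (l i + (s : Circle')))).toReal := by simp [Measure.real]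
        _ ≤ ((volume : Measure Circle') (univ : Set Circle')).toReal :=
            ENNReal.toReal_mono (measure_ne_top _ _) (measure_mono (subset_univ _))
    have h := hfhat i (theta (l i) (r i)) ⟨hL0, le_refl _⟩
    rw [aux_lcMaj_endpoint (theta (l i) (r i)) hL0 _ _ hMb] at h
    rw [hend] at h
    exact h
  -- summability facts
  have hVsum0 : (∑' i, (volume : Measure Circle') (arcCC (l i) (r i))) ≠ ⊤ := by
    rw [← measure_iUnion hdisj hmUi]
    exact measure_ne_top _ _
  have hV : Summable (fun i => ((volume : Measure Circle') (arcCC (l i) (r i))).toReal) :=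
    ENNReal.summable_toReal hVsum0
  have hVtsum : ((volume : Measure Circle') (⋃ i, arcCC (l i) (r i))).toReal
      = ∑' i, ((volume : Measure Circle') (arcCC (l i) (r i))).toReal := by
    rw [measure_iUnion hdisj hmUi, ENNReal.tsum_toReal_eq (fun i => measure_ne_top _ _)]
  have hsum_of_bdd : ∀ (g : ι → Circle' → ℝ), (∀ i, Measurable (g i)) → ∀ C : ℝ,
      (∀ i u, ‖g i u‖ ≤ C) →
      Summable (fun i => ∫ u in arcCC (l i) (r i), g i u ∂(volume : Measure Circle')) := by
    intro g hmeas C hbd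
    apply Summable.of_norm_bounded
      (g := fun i => C * ((volume : Measure Circle') (arcCC (l i) (r i))).toReal) (hV.mul_left C)
    intro i
    exact norm_setIntegral_le_of_norm_le_const (measure_lt_top _ _) (fun x _ => hbd i x)
  obtain ⟨C₁, hC₁⟩ := aux_hFun_bound m₁ h1 h1'
  obtain ⟨C₂, hC₂⟩ := aux_hFun_bound m₂ h2 h2'
  have hsum1 : Summable (fun i => ∫ u in arcCC (l i) (r i), hFun m₁ (fhat i u)
      ∂(volume : Measure Circle')) :=
    hsum_of_bdd _ (fun i => (aux_hFun_continuous m₁ h1 h1').measurable.comp (hfhatmeas i))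
      C₁ (fun i u => hC₁ _ (hfhatrange i u))
  have hsum2 : Summable (fun i => ∫ u in arcCC (l i) (r i), hFun m₂ (fhat i u)
      ∂(volume : Measure Circle')) :=
    hsum_of_bdd _ (fun i => (aux_hFun_continuous m₂ h2 h2').measurable.comp (hfhatmeas i))
      C₂ (fun i u => hC₂ _ (hfhatrange i u))
  have hsumf2 : Summable (fun i => ∫ u in arcCC (l i) (r i), f₂ u
      ∂(volume : Measure Circle')) :=
    hsum_of_bdd (fun _ => f₂) (fun _ => hf₂meas) 1 (fun i u => by
      rw [Real.norm_eq_abs, abs_le]; constructor <;> linarith [(hf₂range u).1, (hf₂range u).2])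
  have hf2tsum : (∫ u in (⋃ i, arcCC (l i) (r i)), f₂ u ∂(volume : Measure Circle'))
      = ∑' i, ∫ u in arcCC (l i) (r i), f₂ u ∂(volume : Measure Circle') :=
    integral_iUnion hmUi hdisj (hintf2.integrableOn)
  -- per-index difference
  have hdiffi : ∀ i, (∫ u in arcCC (l i) (r i), hFun m₁ (fhat i u) ∂(volume : Measure Circle'))
      - (∫ u in arcCC (l i) (r i), hFun m₂ (fhat i u) ∂(volume : Measure Circle'))
      = Real.log (m₂ / m₁)
          * (∫ u in arcCC (l i) (r i), f₂ u ∂(volume : Measure Circle'))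
        + Real.log ((1 - m₂) / (1 - m₁))
          * (((volume : Measure Circle') (arcCC (l i) (r i))).toReal
              - ∫ u in arcCC (l i) (r i), f₂ u ∂(volume : Measure Circle')) := by
    intro i
    rw [← hS i]
    exact aux_set_hFun_diff m₁ m₂ h1 h1' h2 h2' _ (hmUi i) (fhat i) (hfhatmeas i) (hfhatrange i)
  -- sum of differences
  have hT : (∑' i, ∫ u in arcCC (l i) (r i), hFun m₁ (fhat i u) ∂(volume : Measure Circle'))
      - (∑' i, ∫ u in arcCC (l i) (r i), hFun m₂ (fhat i u) ∂(volume : Measure Circle'))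
      = Real.log (m₂ / m₁)
          * (∫ u in (⋃ i, arcCC (l i) (r i)), f₂ u ∂(volume : Measure Circle'))
        + Real.log ((1 - m₂) / (1 - m₁))
          * (((volume : Measure Circle') (⋃ i, arcCC (l i) (r i))).toReal
              - ∫ u in (⋃ i, arcCC (l i) (r i)), f₂ u ∂(volume : Measure Circle')) := by
    rw [← Summable.tsum_sub hsum1 hsum2, tsum_congr hdiffi,
      Summable.tsum_add (hsumf2.mul_left _) ((hV.sub hsumf2).mul_left _),
      tsum_mul_left, tsum_mul_left, Summable.tsum_sub hV hsumf2, hf2tsum, hVtsum]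
  -- the union side
  have hUcongr : (∫ u in (⋃ i, arcCC (l i) (r i)), hFun m₁ (f₁ u) ∂(volume : Measure Circle'))
      = ∫ u in (⋃ i, arcCC (l i) (r i)), hFun m₁ (f₂ u) ∂(volume : Measure Circle') := by
    apply setIntegral_congr_ae hmU
    filter_upwards [Filter.eventuallyEq_set.mp hU] with u hu huU
    exact congrArg (hFun m₁) (hu.mpr huU)
  have hUdiff : (∫ u in (⋃ i, arcCC (l i) (r i)), hFun m₁ (f₂ u) ∂(volume : Measure Circle'))
      - (∫ u in (⋃ i, arcCC (l i) (r i)), hFun m₂ (f₂ u) ∂(volume : Measure Circle'))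
      = Real.log (m₂ / m₁)
          * (∫ u in (⋃ i, arcCC (l i) (r i)), f₂ u ∂(volume : Measure Circle'))
        + Real.log ((1 - m₂) / (1 - m₁))
          * (((volume : Measure Circle') (⋃ i, arcCC (l i) (r i))).toReal
              - ∫ u in (⋃ i, arcCC (l i) (r i)), f₂ u ∂(volume : Measure Circle')) :=
    aux_set_hFun_diff m₁ m₂ h1 h1' h2 h2' _ hmU f₂ hf₂meas hf₂range
  have hsplit1 : (∫ u in (⋃ i, arcCC (l i) (r i)), hFun m₁ (f₁ u) ∂(volume : Measure Circle'))
      + (∫ u in (⋃ i, arcCC (l i) (r i))ᶜ, hFun m₁ (f₁ u) ∂(volume : Measure Circle'))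
      = ∫ u, hFun m₁ (f₁ u) ∂(volume : Measure Circle') := integral_add_compl hmU hint11
  have hsplit2 : (∫ u in (⋃ i, arcCC (l i) (r i)), hFun m₂ (f₂ u) ∂(volume : Measure Circle'))
      + (∫ u in (⋃ i, arcCC (l i) (r i))ᶜ, hFun m₂ (f₂ u) ∂(volume : Measure Circle'))
      = ∫ u, hFun m₂ (f₂ u) ∂(volume : Measure Circle') := integral_add_compl hmU hint22
  have hD : 0 ≤ ∫ u in (⋃ i, arcCC (l i) (r i))ᶜ, hFun m₂ (f₂ u)
      ∂(volume : Measure Circle') :=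
    setIntegral_nonneg hmU.compl (fun u _ => aux_hFun_nonneg m₂ (f₂ u) hm₂pos hm₂lt (hf₂range u))
  have hT₂ : 0 ≤ ∑' i, ∫ u in arcCC (l i) (r i), hFun m₂ (fhat i u)
      ∂(volume : Measure Circle') :=
    tsum_nonneg (fun i => setIntegral_nonneg (hmUi i)
      (fun u _ => aux_hFun_nonneg m₂ _ hm₂pos hm₂lt (hfhatrange i u)))
  constructor
  · linarith [hT, hUcongr, hUdiff, hsplit1, hsplit2]
  · linarith [hT, hUcongr, hUdiff, hsplit1, hsplit2, hD, hT₂]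


end
end
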